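/- arXiv:1403.6108 — 7 statements merged into one kernel-verified Lean document; each statement's English description precedes it below -/
import Mathlib

section
/- There exist constants C > 0 and R₀ > 0 such that for all R ≥ R₀, |4π ∫₀^R s² (1+s²)^(−1/2) ds − (2πR² − 2π log R + π(1 − log 4) − (3π/4) R^(−2))| ≤ C R^(−4). In other words, the volume of the hyperbolic geodesic ball of coordinate radius R satisfies Vol₀(R) = 2πR² − 2π log R + π(1 − log 4) − (3π/4)R^(−2) + O(R^(−4)) as R → ∞. -/
open Real MeasureTheory

private lemma antideriv_hasDerivAt (s : ℝ) :
    HasDerivAt (fun t : ℝ => (t * Real.sqrt (1 + t ^ 2) - Real.arsinh t) / 2)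
      (s ^ 2 / Real.sqrt (1 + s ^ 2)) s := by
  have hpos : (0:ℝ) < 1 + s ^ 2 := by positivity
  have hsq : Real.sqrt (1 + s ^ 2) ^ 2 = 1 + s ^ 2 := Real.sq_sqrt hpos.le
  have hsqrt_pos : 0 < Real.sqrt (1 + s ^ 2) := Real.sqrt_pos.2 hpos
  have h1 : HasDerivAt (fun t : ℝ => 1 + t ^ 2) (2 * s) s := by
    simpa using ((hasDerivAt_pow 2 s).const_add 1)
  have h2 : HasDerivAt (fun t : ℝ => Real.sqrt (1 + t ^ 2))
      (2 * s / (2 * Real.sqrt (1 + s ^ 2))) s :=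
    (Real.hasDerivAt_sqrt hpos.ne').comp s h1 |>.congr_deriv (by ring)
  have h3 : HasDerivAt (fun t : ℝ => t * Real.sqrt (1 + t ^ 2))
      (1 * Real.sqrt (1 + s ^ 2) + s * (2 * s / (2 * Real.sqrt (1 + s ^ 2)))) s :=
    (hasDerivAt_id s).mul h2
  have h4 := (h3.sub (Real.hasDerivAt_arsinh s)).div_const 2
  refine h4.congr_deriv ?_
  field_simp
  nlinarith [hsq, hsqrt_pos]

private lemma integral_eval (R : ℝ) :
    ∫ s in (0:ℝ)..R, s ^ 2 / Real.sqrt (1 + s ^ 2)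
      = (R * Real.sqrt (1 + R ^ 2) - Real.arsinh R) / 2 := by
  have hcont : Continuous fun s : ℝ => s ^ 2 / Real.sqrt (1 + s ^ 2) := by
    refine Continuous.div (by continuity) (by continuity) ?_
    intro s
    exact (Real.sqrt_pos.2 (by positivity)).ne'
  have := intervalIntegral.integral_eq_sub_of_hasDerivAt
    (f := fun t : ℝ => (t * Real.sqrt (1 + t ^ 2) - Real.arsinh t) / 2)
    (fun s _ => antideriv_hasDerivAt s) (hcont.intervalIntegrable 0 R)
  simpa [Real.arsinh_zero] using this

private lemma sqrt_lb {x : ℝ} (hx0 : 0 ≤ x) (hx1 : x ≤ 1) :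
    1 + x / 2 - x ^ 2 / 8 ≤ Real.sqrt (1 + x) := by
  have hp : (0:ℝ) ≤ 1 + x / 2 - x ^ 2 / 8 := by nlinarith
  have h : (1 + x / 2 - x ^ 2 / 8) ^ 2 ≤ 1 + x := by
    nlinarith [pow_le_pow_of_le_one hx0 hx1 (show 3 ≤ 4 by norm_num), pow_nonneg hx0 3]
  calc 1 + x / 2 - x ^ 2 / 8 = Real.sqrt ((1 + x / 2 - x ^ 2 / 8) ^ 2) :=
        (Real.sqrt_sq hp).symm
    _ ≤ Real.sqrt (1 + x) := Real.sqrt_le_sqrt h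

private lemma sqrt_ub {x : ℝ} (hx0 : 0 ≤ x) (hx1 : x ≤ 1) :
    Real.sqrt (1 + x) ≤ 1 + x / 2 - x ^ 2 / 8 + x ^ 3 / 16 := by
  have hq : (0:ℝ) ≤ 1 + x / 2 - x ^ 2 / 8 + x ^ 3 / 16 := by nlinarith
  have h : 1 + x ≤ (1 + x / 2 - x ^ 2 / 8 + x ^ 3 / 16) ^ 2 := by
    nlinarith [pow_le_pow_of_le_one hx0 hx1 (show 4 ≤ 5 by norm_num), pow_nonneg hx0 4,
      pow_nonneg hx0 6]
  calc Real.sqrt (1 + x) ≤ Real.sqrt ((1 + x / 2 - x ^ 2 / 8 + x ^ 3 / 16) ^ 2) :=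
        Real.sqrt_le_sqrt h
    _ = _ := Real.sqrt_sq hq

private lemma log_ub {u : ℝ} (hu : 0 ≤ u) : Real.log (1 + u) ≤ u := by
  have := Real.log_le_sub_one_of_pos (x := 1 + u) (by linarith)
  linarith

private lemma log_lb {u : ℝ} (hu : 0 ≤ u) : u - u ^ 2 ≤ Real.log (1 + u) := by
  have h1 : (0:ℝ) < 1 + u := by linarith
  have := Real.one_sub_inv_le_log_of_pos h1
  have h2 : u - u ^ 2 ≤ 1 - (1 + u)⁻¹ := by
    have h3 : (1 + u) * (1 + u)⁻¹ = 1 := mul_inv_cancel₀ h1.ne'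
    nlinarith [h3, inv_nonneg.2 h1.le, mul_nonneg (mul_nonneg hu hu) hu]
  linarith

private lemma key_bound {x : ℝ} (hx0 : 0 < x) (hx1 : x ≤ 1) :
    |(Real.sqrt (1 + x) - 1) / x - 1 / 2 + 3 * x / 8
        - Real.log (1 + (Real.sqrt (1 + x) - 1) / 2)| ≤ 3 / 8 * x ^ 2 := by
  set s := Real.sqrt (1 + x) with hs
  set u := (s - 1) / 2 with hudef
  have hs1 : 1 + x / 2 - x ^ 2 / 8 ≤ s := sqrt_lb hx0.le hx1
  have hs2 : s ≤ 1 + x / 2 - x ^ 2 / 8 + x ^ 3 / 16 := sqrt_ub hx0.le hx1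
  have hx3 : x ^ 3 ≤ x ^ 2 := pow_le_pow_of_le_one hx0.le hx1 (by norm_num)
  have hu1 : x / 4 - x ^ 2 / 16 ≤ u := by rw [hudef]; linarith
  have hu2 : u ≤ x / 4 - x ^ 2 / 16 + x ^ 3 / 32 := by rw [hudef]; linarith
  have hu0 : 0 ≤ u := by nlinarith
  have hux : u ≤ x / 2 := by nlinarith
  have hl1 : Real.log (1 + u) ≤ u := log_ub hu0
  have hl2 : u - u ^ 2 ≤ Real.log (1 + u) := log_lb hu0
  have hA1 : 1 / 2 - x / 8 ≤ (s - 1) / x := by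
    rw [le_div_iff₀ hx0]; nlinarith
  have hA2 : (s - 1) / x ≤ 1 / 2 - x / 8 + x ^ 2 / 16 := by
    rw [div_le_iff₀ hx0]; nlinarith
  rw [abs_le]
  constructor
  · nlinarith [sq_nonneg x, sq_nonneg u]
  · nlinarith [mul_self_le_mul_self hu0 hux, sq_nonneg u]

/-- asymptotic expansion of the volume of the hyperbolic geodesic
ball of coordinate radius `R`, with error `O(R⁻⁴)` as `R → ∞`. -/
theorem hyperbolic_ball_volume_expansion :
    ∃ C > (0:ℝ), ∃ R₀ > (0:ℝ), ∀ R ≥ R₀,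
      |4 * π * (∫ s in (0:ℝ)..R, s ^ 2 / Real.sqrt (1 + s ^ 2))
          - (2 * π * R ^ 2 - 2 * π * Real.log R + π * (1 - Real.log 4)
              - (3 * π / 4) / R ^ 2)| ≤ C / R ^ 4 := by
  refine ⟨3, by norm_num, 1, by norm_num, fun R hR => ?_⟩
  have hR0 : (0:ℝ) < R := lt_of_lt_of_le one_pos hR
  set x : ℝ := 1 / R ^ 2 with hxdef
  have hx0 : 0 < x := by positivity
  have hx1 : x ≤ 1 := by
    rw [hxdef, div_le_one (by positivity)]
    nlinarith
  have hxR : x * R ^ 2 = 1 := by rw [hxdef]; field_simp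
  set s : ℝ := Real.sqrt (1 + x) with hsdef
  have hs1 : (1:ℝ) ≤ s := by
    rw [hsdef]
    nlinarith [sqrt_lb hx0.le hx1, sq_nonneg x]
  set u : ℝ := (s - 1) / 2 with hudef
  have hu0 : 0 ≤ u := by rw [hudef]; linarith
  have hsqrt : Real.sqrt (1 + R ^ 2) = R * s := by
    rw [hsdef, show (1:ℝ) + R ^ 2 = R ^ 2 * (1 + x) by rw [hxdef]; field_simp; ring,
      Real.sqrt_mul (by positivity), Real.sqrt_sq hR0.le]
  have harsinh : Real.arsinh R = Real.log R + Real.log 2 + Real.log (1 + u) := by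
    rw [Real.arsinh, hsqrt, show R + R * s = R * (2 * (1 + u)) by rw [hudef]; ring,
      Real.log_mul hR0.ne' (by positivity),
      Real.log_mul (by norm_num : (2:ℝ) ≠ 0) (by positivity : (1:ℝ) + u ≠ 0)]
    ring
  have hlog4 : Real.log 4 = 2 * Real.log 2 := by
    rw [show (4:ℝ) = 2 ^ 2 by norm_num, Real.log_pow]
    push_cast; ring
  have hkey := key_bound hx0 hx1
  rw [← hsdef, ← hudef] at hkey
  have hEq : 4 * π * (∫ t in (0:ℝ)..R, t ^ 2 / Real.sqrt (1 + t ^ 2))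
      - (2 * π * R ^ 2 - 2 * π * Real.log R + π * (1 - Real.log 4)
          - (3 * π / 4) / R ^ 2)
      = 2 * π * ((s - 1) / x - 1 / 2 + 3 * x / 8 - Real.log (1 + u)) := by
    rw [integral_eval, hsqrt, harsinh, hlog4]
    have hxne : x ≠ 0 := hx0.ne'
    have hdiv : (s - 1) / x = (s - 1) * R ^ 2 := by
      rw [div_eq_iff hxne]
      linear_combination (1 - s) * hxR
    rw [hdiv, hxdef]
    ring
  rw [hEq, abs_mul, abs_of_nonneg (by positivity : (0:ℝ) ≤ 2 * π)]
  calc 2 * π * |(s - 1) / x - 1 / 2 + 3 * x / 8 - Real.log (1 + u)|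
      ≤ 2 * π * (3 / 8 * x ^ 2) := by
        exact mul_le_mul_of_nonneg_left hkey (by positivity)
    _ ≤ 3 / R ^ 4 := by
        have heq : 2 * π * (3 / 8 * x ^ 2) = 3 * π / 4 / R ^ 4 := by
          rw [hxdef]; field_simp; ring
        rw [heq]
        gcongr
        linarith [Real.pi_le_four]
end

section
/- For every m ≥ 0, the limit V_m := lim_{R→∞} ( Vol_m(R) − Vol₀(R) ) exists and is a finite real number (the renormalized volume of Schwarzschild–anti-deSitter of mass m), and V_0 = 0. -/
open Real MeasureTheory Filter

/-- Volume of the centered coordinate ball of radius `R` in hyperbolic space. -/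
noncomputable def hypVol (R : ℝ) : ℝ :=
  4 * π * ∫ s in (0:ℝ)..R, s ^ 2 / Real.sqrt (1 + s ^ 2)

/-- Volume of the centered coordinate ball of radius `R` in
Schwarzschild-anti-deSitter of mass `m`. -/
noncomputable def sAdSVol (m R : ℝ) : ℝ :=
  4 * π * ∫ s in (2 * m)..R, s ^ 2 / Real.sqrt (1 + s ^ 2 - 2 * m / s)

lemma sAdS_arg_pos {m s : ℝ} (hm : 0 < m) (hs : 2 * m ≤ s) :
    s ^ 2 ≤ 1 + s ^ 2 - 2 * m / s := by
  have hs0 : 0 < s := lt_of_lt_of_le (by linarith) hs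
  have : 2 * m / s ≤ 1 := (div_le_one hs0).mpr hs
  linarith

lemma f0_cont : Continuous (fun s : ℝ => s ^ 2 / Real.sqrt (1 + s ^ 2)) := by
  apply Continuous.div (by continuity) (by continuity)
  intro x
  exact ne_of_gt (Real.sqrt_pos.mpr (by positivity))

lemma fm_contOn {m : ℝ} (hm : 0 < m) :
    ContinuousOn (fun s : ℝ => s ^ 2 / Real.sqrt (1 + s ^ 2 - 2 * m / s))
      (Set.Ici (2 * m)) := by
  have h0 : ∀ x ∈ Set.Ici (2 * m), (0:ℝ) < x := fun x hx =>
    lt_of_lt_of_le (by linarith) hx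
  apply ContinuousOn.div
  · exact (continuous_pow 2).continuousOn
  · apply Real.continuous_sqrt.comp_continuousOn
    apply ContinuousOn.sub
    · exact (continuous_const.add (continuous_pow 2)).continuousOn
    · exact continuousOn_const.div continuousOn_id fun x hx => (h0 x hx).ne'
  · intro x hx
    refine ne_of_gt (Real.sqrt_pos.mpr ?_)
    have h1 := sAdS_arg_pos hm hx
    have hx0 := h0 x hx
    nlinarith

lemma key_formula {m s : ℝ} (hm : 0 < m) (hs : 2 * m ≤ s) :
    s ^ 2 / Real.sqrt (1 + s ^ 2 - 2 * m / s) - s ^ 2 / Real.sqrt (1 + s ^ 2)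
      = 2 * m * s / (Real.sqrt (1 + s ^ 2 - 2 * m / s) * Real.sqrt (1 + s ^ 2) *
          (Real.sqrt (1 + s ^ 2 - 2 * m / s) + Real.sqrt (1 + s ^ 2))) := by
  have hs0 : 0 < s := lt_of_lt_of_le (by linarith) hs
  set A := Real.sqrt (1 + s ^ 2 - 2 * m / s) with hA
  set B := Real.sqrt (1 + s ^ 2) with hB
  have ha' : (0:ℝ) < 1 + s ^ 2 - 2 * m / s :=
    lt_of_lt_of_le (by positivity) (sAdS_arg_pos hm hs)
  have hApos : 0 < A := Real.sqrt_pos.mpr ha'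
  have hBpos : 0 < B := Real.sqrt_pos.mpr (by positivity)
  have hA2 : A ^ 2 = 1 + s ^ 2 - 2 * m / s := Real.sq_sqrt ha'.le
  have hB2 : B ^ 2 = 1 + s ^ 2 := Real.sq_sqrt (by positivity)
  have h1 : s * B ^ 2 - s * A ^ 2 = 2 * m := by
    rw [hA2, hB2]; field_simp; ring
  rw [div_sub_div _ _ hApos.ne' hBpos.ne',
    div_eq_div_iff (by positivity) (by positivity)]
  linear_combination (s * A * B) * h1

lemma key_nonneg {m s : ℝ} (hm : 0 < m) (hs : 2 * m ≤ s) :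
    0 ≤ s ^ 2 / Real.sqrt (1 + s ^ 2 - 2 * m / s) - s ^ 2 / Real.sqrt (1 + s ^ 2) := by
  rw [key_formula hm hs]
  have hs0 : 0 < s := lt_of_lt_of_le (by linarith) hs
  have ha' : (0:ℝ) < 1 + s ^ 2 - 2 * m / s :=
    lt_of_lt_of_le (by positivity) (sAdS_arg_pos hm hs)
  have hApos : 0 < Real.sqrt (1 + s ^ 2 - 2 * m / s) := Real.sqrt_pos.mpr ha'
  have hBpos : 0 < Real.sqrt (1 + s ^ 2) := Real.sqrt_pos.mpr (by positivity)
  positivity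

lemma key_le {m s : ℝ} (hm : 0 < m) (hs : 2 * m ≤ s) :
    s ^ 2 / Real.sqrt (1 + s ^ 2 - 2 * m / s) - s ^ 2 / Real.sqrt (1 + s ^ 2)
      ≤ m / s ^ 2 := by
  rw [key_formula hm hs]
  have hs0 : 0 < s := lt_of_lt_of_le (by linarith) hs
  set A := Real.sqrt (1 + s ^ 2 - 2 * m / s) with hA
  set B := Real.sqrt (1 + s ^ 2) with hB
  have ha' : (0:ℝ) < 1 + s ^ 2 - 2 * m / s :=
    lt_of_lt_of_le (by positivity) (sAdS_arg_pos hm hs)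
  have hAs : s ≤ A := (Real.le_sqrt' hs0).mpr (sAdS_arg_pos hm hs)
  have hBs : s ≤ B := (Real.le_sqrt' hs0).mpr (by nlinarith)
  calc 2 * m * s / (A * B * (A + B)) ≤ 2 * m * s / (s * s * (s + s)) := by
        have hden : s * s * (s + s) ≤ A * B * (A + B) :=
          mul_le_mul (mul_le_mul hAs hBs hs0.le (by linarith))
            (by linarith) (by positivity) (by positivity)
        gcongr
    _ = m / s ^ 2 := by
        field_simp
        ring

lemma g_integrable {m : ℝ} (hm : 0 < m) :
    IntegrableOn (fun s : ℝ =>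
        s ^ 2 / Real.sqrt (1 + s ^ 2 - 2 * m / s) - s ^ 2 / Real.sqrt (1 + s ^ 2))
      (Set.Ioi (2 * m)) := by
  have hdom : IntegrableOn (fun s : ℝ => m / s ^ 2) (Set.Ioi (2 * m)) := by
    have h := integrableOn_Ioi_rpow_of_lt (by norm_num : (-2:ℝ) < -1)
      (by linarith : (0:ℝ) < 2 * m)
    have h2 : IntegrableOn (fun x : ℝ => m * x ^ (-2 : ℝ)) (Set.Ioi (2 * m)) :=
      h.const_mul m
    apply h2.congr_fun ?_ measurableSet_Ioi
    intro x hx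
    have hx0 : (0:ℝ) < x := lt_trans (by linarith) hx
    show m * x ^ (-2 : ℝ) = m / x ^ 2
    rw [Real.rpow_neg hx0.le, show ((2:ℝ) = ((2:ℕ):ℝ)) by norm_num,
      Real.rpow_natCast, div_eq_mul_inv]
  apply Integrable.mono' hdom
  · apply Measurable.aestronglyMeasurable
    apply Measurable.sub
    · exact (measurable_id.pow_const 2).div
        (Real.continuous_sqrt.measurable.comp ((measurable_const.add (measurable_id.pow_const 2)).sub
          (measurable_const.div measurable_id)))
    · exact (measurable_id.pow_const 2).div
        (Real.continuous_sqrt.measurable.comp (measurable_const.add (measurable_id.pow_const 2)))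
  · filter_upwards [ae_restrict_mem measurableSet_Ioi] with s hs
    rw [Real.norm_eq_abs, abs_of_nonneg (key_nonneg hm (le_of_lt hs))]
    exact key_le hm (le_of_lt hs)

lemma sAdS_zero (R : ℝ) : sAdSVol 0 R = hypVol R := by
  simp [sAdSVol, hypVol]

/-- for every `m ≥ 0` the renormalized volume
`V_m = lim_{R→∞} (Vol_m(R) - Vol₀(R))` exists (as a finite real number),
and `V_0 = 0`. -/
theorem renormalized_volume_exists :
    (∀ m : ℝ, 0 ≤ m → ∃ V : ℝ,
        Tendsto (fun R => sAdSVol m R - hypVol R) atTop (nhds V))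
    ∧ Tendsto (fun R => sAdSVol 0 R - hypVol R) atTop (nhds 0) := by
  have hzero : Tendsto (fun R => sAdSVol 0 R - hypVol R) atTop (nhds 0) := by
    have : (fun R => sAdSVol 0 R - hypVol R) = fun _ => (0:ℝ) := by
      funext R; rw [sAdS_zero, sub_self]
    rw [this]
    exact tendsto_const_nhds
  refine ⟨fun m hm => ?_, hzero⟩
  rcases eq_or_lt_of_le hm with h0 | hm'
  · exact ⟨0, h0 ▸ hzero⟩
  set g : ℝ → ℝ := fun s =>
    s ^ 2 / Real.sqrt (1 + s ^ 2 - 2 * m / s) - s ^ 2 / Real.sqrt (1 + s ^ 2) with hg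
  set C : ℝ := ∫ s in (0:ℝ)..(2 * m), s ^ 2 / Real.sqrt (1 + s ^ 2) with hC
  set I : ℝ := ∫ s in Set.Ioi (2 * m), g s with hI
  refine ⟨4 * π * (I - C), ?_⟩
  have hint : Tendsto (fun R => ∫ s in (2 * m)..R, g s) atTop (nhds I) :=
    intervalIntegral_tendsto_integral_Ioi (2 * m) (g_integrable hm') tendsto_id
  have base : Tendsto (fun R => 4 * π * ((∫ s in (2 * m)..R, g s) - C)) atTop
      (nhds (4 * π * (I - C))) :=
    (hint.sub_const C).const_mul (4 * π)
  refine base.congr' ?_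
  filter_upwards [eventually_ge_atTop (2 * m)] with R hR
  have i1 : IntervalIntegrable
      (fun s : ℝ => s ^ 2 / Real.sqrt (1 + s ^ 2 - 2 * m / s)) volume (2 * m) R := by
    apply ContinuousOn.intervalIntegrable
    apply (fm_contOn hm').mono
    rw [Set.uIcc_of_le hR]
    exact Set.Icc_subset_Ici_self
  have i2 : IntervalIntegrable
      (fun s : ℝ => s ^ 2 / Real.sqrt (1 + s ^ 2)) volume (2 * m) R :=
    f0_cont.intervalIntegrable _ _
  have i3 : IntervalIntegrable
      (fun s : ℝ => s ^ 2 / Real.sqrt (1 + s ^ 2)) volume 0 (2 * m) :=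
    f0_cont.intervalIntegrable _ _
  have hsplit : (∫ s in (0:ℝ)..R, s ^ 2 / Real.sqrt (1 + s ^ 2))
      = C + ∫ s in (2 * m)..R, s ^ 2 / Real.sqrt (1 + s ^ 2) := by
    rw [hC, intervalIntegral.integral_add_adjacent_intervals i3 i2]
  have hgsub : (∫ s in (2 * m)..R, g s)
      = (∫ s in (2 * m)..R, s ^ 2 / Real.sqrt (1 + s ^ 2 - 2 * m / s))
        - ∫ s in (2 * m)..R, s ^ 2 / Real.sqrt (1 + s ^ 2) :=
    intervalIntegral.integral_sub i1 i2
  rw [sAdSVol, hypVol, hsplit, hgsub]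
  ring
end

section
/- Fix m ≥ 0. Then there exist constants C > 0 and R₀ > max(2m, 0) such that for all R ≥ R₀, the tail integral satisfies |4π ∫_R^∞ s² [ (1 + s² − 2m s^(−1))^(−1/2) − (1 + s²)^(−1/2) ] ds − (4πm R^(−1) − 2πm R^(−3))| ≤ C R^(−4). In particular the tail integral equals 4πm R^(−1) − 2πm R^(−3) + O(R^(−4)) as R → ∞. -/
open Real MeasureTheory

section AuxLemmas
open Set Filter

set_option maxHeartbeats 2000000 in
lemma aux1 (m s : ℝ) (hm : 0 ≤ m) (hs : 2*m + 1 ≤ s) :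
    |s^2/Real.sqrt (1+s^2-2*m/s) - s^2/Real.sqrt (1+s^2) - m*s/(Real.sqrt (1+s^2))^3|
      ≤ 2*m^2/s^5 := by
  have hs1 : (1:ℝ) ≤ s := by linarith
  have hs0 : (0:ℝ) < s := by linarith
  have hms : 2*m/s ≤ 1 := by
    rw [div_le_one hs0]; linarith
  have hms0 : 0 ≤ 2*m/s := by positivity
  have hA : (0:ℝ) < 1 + s^2 - 2*m/s := by nlinarith
  set u := Real.sqrt (1+s^2-2*m/s) with hudef
  set v := Real.sqrt (1+s^2) with hvdef
  have hu2 : u^2 = 1+s^2-2*m/s := Real.sq_sqrt hA.le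
  have hv2 : v^2 = 1+s^2 := Real.sq_sqrt (by positivity)
  have u0 : 0 < u := Real.sqrt_pos.mpr hA
  have v0 : 0 < v := Real.sqrt_pos.mpr (by positivity)
  have hu : s ≤ u := by nlinarith
  have hv : s ≤ v := by nlinarith
  have huv : u ≤ v := by nlinarith
  have hd' : s*(v^2 - u^2) = 2*m := by
    rw [hu2, hv2]; field_simp; ring
  have key : s^2/u - s^2/v = 2*m*s/(u*v*(u+v)) := by
    rw [div_sub_div _ _ u0.ne' v0.ne', div_eq_div_iff (by positivity) (by positivity)]
    linear_combination (s*u*v) * hd'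
  rw [key, abs_le]
  have hvu' : s^2*(v-u) ≤ m := by
    have hd'' : s*(v-u)*(u+v) = 2*m := by linear_combination hd'
    nlinarith [mul_nonneg (mul_nonneg hs0.le (sub_nonneg.mpr huv)) (by linarith : (0:ℝ) ≤ u+v-2*s)]
  have hN : s*(2*v^2 - u^2 - u*v) ≤ 4*m := by
    have hvb : v ≤ 2*s := by nlinarith
    nlinarith [mul_nonneg (mul_nonneg hs0.le (sub_nonneg.mpr huv)) (by linarith : (0:ℝ) ≤ 2*s - v)]
  constructor
  · have hstep : u*v*(u+v) ≤ 2*v^3 := by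
      nlinarith [mul_nonneg (mul_nonneg v0.le (sub_nonneg.mpr huv)) (by linarith : (0:ℝ) ≤ u+2*v)]
    have h1 : m*s/v^3 ≤ 2*m*s/(u*v*(u+v)) := by
      rw [div_le_div_iff₀ (by positivity) (by positivity)]
      nlinarith [mul_le_mul_of_nonneg_left hstep (mul_nonneg hm hs0.le)]
    have h2 : (0:ℝ) ≤ 2*m^2/s^5 := by positivity
    linarith
  · rw [div_sub_div _ _ (by positivity : u*v*(u+v) ≠ 0) (by positivity : (v:ℝ)^3 ≠ 0),
      div_le_div_iff₀ (by positivity) (by positivity)]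
    have step1 : (2*m*s*v^3 - m*s*(u*v*(u+v)))*s^5 ≤ 4*m^2*s^5*v := by
      nlinarith [mul_le_mul_of_nonneg_left hN (show (0:ℝ) ≤ m*s^5*v by positivity)]
    have huu : 2*s^2 ≤ u*(u+v) := by nlinarith
    have sub1 : 4*m^2*s^2*v^4 ≤ 2*m^2*(u*v*(u+v)*v^3) := by
      nlinarith [mul_le_mul_of_nonneg_left huu (show (0:ℝ) ≤ 2*m^2*v^4 by positivity)]
    have hv3 : s^3 ≤ v^3 := by nlinarith
    have sub2 : 4*m^2*s^5*v ≤ 4*m^2*s^2*v^4 := by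
      nlinarith [mul_le_mul_of_nonneg_left hv3 (show (0:ℝ) ≤ 4*m^2*s^2*v by positivity)]
    linarith

set_option maxHeartbeats 2000000 in
lemma aux2 (m s : ℝ) (hm : 0 ≤ m) (hs1 : 1 ≤ s) :
    |m*s/(Real.sqrt (1+s^2))^3 - (m/s^2 - 3*m/(2*s^4))| ≤ 4*m/s^5 := by
  have hs0 : (0:ℝ) < s := by linarith
  set v := Real.sqrt (1+s^2) with hvdef
  have hv2 : v^2 = 1+s^2 := Real.sq_sqrt (by positivity)
  have v0 : 0 < v := Real.sqrt_pos.mpr (by positivity)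
  have hv : s ≤ v := by nlinarith
  have hv3 : v^3 = (s^2+1)*v := by linear_combination v*hv2
  have h2sv : 2*s*v ≤ 2*s^2+1 := by nlinarith
  have hlow : 4*s^3+3*s ≤ (4*s^2+1)*v := by nlinarith [sq_nonneg ((4*s^2+1)*v - (4*s^3+3*s)), mul_pos hs0 v0]
  have keyE : m*s/v^3 - (m/s^2 - 3*m/(2*s^4)) = m*(2*s^5 - 2*s^2*v^3 + 3*v^3)/(2*s^4*v^3) := by
    field_simp
    ring
  rw [keyE, abs_div, abs_of_pos (by positivity : (0:ℝ) < 2*s^4*v^3),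
    div_le_div_iff₀ (by positivity) (pow_pos hs0 5)]
  rw [abs_mul, abs_of_nonneg hm]
  have hC : (0:ℝ) ≤ 2*s^5+8*s^2+8-s^3-3*s := by
    nlinarith [mul_nonneg (pow_nonneg hs0.le 3) (by nlinarith : (0:ℝ) ≤ 2*s^2-1),
      mul_nonneg hs0.le (by linarith : (0:ℝ) ≤ 8*s-3)]
  have hQ : (0:ℝ) ≤ 4*s^2+1 := by positivity
  have hup : (2*s^5 - 2*s^2*v^3 + 3*v^3)*s ≤ 8*v^3 := by
    nlinarith [hv3, mul_le_mul_of_nonneg_left hlow hC, hs1, sq_nonneg s, sq_nonneg (s-1), sq_nonneg (s^2-s), mul_pos hs0 hs0]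
  have hlo : -(8*v^3) ≤ (2*s^5 - 2*s^2*v^3 + 3*v^3)*s := by
    nlinarith [hv3, mul_le_mul_of_nonneg_left h2sv (show (0:ℝ) ≤ s^4 by positivity),
      mul_le_mul_of_nonneg_left hv (show (0:ℝ) ≤ s^3 by positivity), v0, hs1,
      mul_nonneg (mul_nonneg hs0.le hs0.le) v0.le, mul_nonneg v0.le hs0.le]
  have hXa : |2*s^5 - 2*s^2*v^3 + 3*v^3| * s ≤ 8*v^3 := by
    have habs : |2*s^5 - 2*s^2*v^3 + 3*v^3| * s = |(2*s^5 - 2*s^2*v^3 + 3*v^3) * s| := by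
      rw [abs_mul, abs_of_pos hs0]
    rw [habs]
    exact abs_le.mpr ⟨hlo, hup⟩
  nlinarith [mul_le_mul_of_nonneg_left hXa (show (0:ℝ) ≤ m*s^4 by positivity)]

lemma intOn_inv_pow (n : ℕ) (hn : 2 ≤ n) {R : ℝ} (hR : 0 < R) :
    IntegrableOn (fun s : ℝ => 1/s^n) (Set.Ioi R) := by
  have hlt : -(n:ℝ) < -1 := by
    have : (2:ℝ) ≤ n := by exact_mod_cast hn
    linarith
  have h := integrableOn_Ioi_rpow_of_lt hlt hR
  refine h.congr_fun (fun x hx => ?_) measurableSet_Ioi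
  have hx0 : 0 < x := hR.trans hx
  show x ^ (-(n:ℝ)) = 1 / x ^ n
  rw [Real.rpow_neg hx0.le, Real.rpow_natCast, one_div]

lemma intBble (K : ℝ) {R : ℝ} (hR : 0 < R) :
    IntegrableOn (fun s : ℝ => K/s^5) (Set.Ioi R) := by
  have h : IntegrableOn (fun x : ℝ => K * (1/x^5)) (Set.Ioi R) :=
    (intOn_inv_pow 5 (by norm_num) hR).const_mul K
  refine h.congr_fun (fun x hx => by ring) measurableSet_Ioi

lemma intB (K : ℝ) {R : ℝ} (hR : 0 < R) :
    ∫ s in Set.Ioi R, K/s^5 = K/(4*R^4) := by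
  have hint := intBble K hR
  have hderiv : ∀ x ∈ Set.Ici R, HasDerivAt (fun s : ℝ => -K/(4*s^4)) (K/x^5) x := by
    intro x hx
    have hx0 : 0 < x := lt_of_lt_of_le hR hx
    have h1 : HasDerivAt (fun s : ℝ => (s^4)⁻¹) (-(4*x^3)/(x^4)^2) x := by
      simpa using (hasDerivAt_pow 4 x).fun_inv (pow_ne_zero 4 hx0.ne')
    have h2 := h1.const_mul (-K/4)
    convert h2 using 1
    · rfl
    · rfl
    · funext s; ring
    · field_simp
  have htend : Tendsto (fun s : ℝ => -K/(4*s^4)) atTop (nhds 0) := by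
    have h1 : Tendsto (fun s : ℝ => (s^4)⁻¹) atTop (nhds 0) :=
      tendsto_inv_atTop_zero.comp (tendsto_pow_atTop (by norm_num))
    have h2 := h1.const_mul (-K/4)
    simp only [mul_zero] at h2
    refine h2.congr (fun s => by ring)
  rw [integral_Ioi_of_hasDerivAt_of_tendsto' hderiv hint htend]
  field_simp
  ring

lemma intPble (m : ℝ) {R : ℝ} (hR : 0 < R) :
    IntegrableOn (fun s : ℝ => m/s^2 - 3*m/(2*s^4)) (Set.Ioi R) := by
  have h : IntegrableOn (fun x : ℝ => m * (1/x^2) - (3*m/2) * (1/x^4)) (Set.Ioi R) :=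
    ((intOn_inv_pow 2 le_rfl hR).const_mul m).sub
      ((intOn_inv_pow 4 (by norm_num) hR).const_mul (3*m/2))
  refine h.congr_fun (fun x hx => by ring) measurableSet_Ioi

lemma intP (m : ℝ) {R : ℝ} (hR : 0 < R) :
    (∫ s in Set.Ioi R, (m/s^2 - 3*m/(2*s^4))) = m/R - m/(2*R^3) := by
  have hint := intPble m hR
  have hderiv : ∀ x ∈ Set.Ici R, HasDerivAt (fun s : ℝ => -m/s + m/(2*s^3))
      (m/x^2 - 3*m/(2*x^4)) x := by
    intro x hx
    have hx0 : 0 < x := lt_of_lt_of_le hR hx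
    have h1 : HasDerivAt (fun s : ℝ => s⁻¹) (-(x^2)⁻¹) x := by
      simpa using hasDerivAt_inv hx0.ne'
    have h2 : HasDerivAt (fun s : ℝ => (s^3)⁻¹) (-(3*x^2)/(x^3)^2) x := by
      simpa using (hasDerivAt_pow 3 x).fun_inv (pow_ne_zero 3 hx0.ne')
    have h3 := (h1.const_mul (-m)).add (h2.const_mul (m/2))
    convert h3 using 1
    · rfl
    · rfl
    · funext s; simp only [Pi.add_apply]; ring
    · field_simp; ring
  have htend : Tendsto (fun s : ℝ => -m/s + m/(2*s^3)) atTop (nhds 0) := by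
    have h1 : Tendsto (fun s : ℝ => s⁻¹) atTop (nhds 0) := tendsto_inv_atTop_zero
    have h2 : Tendsto (fun s : ℝ => (s^3)⁻¹) atTop (nhds 0) :=
      tendsto_inv_atTop_zero.comp (tendsto_pow_atTop (by norm_num))
    have h3 := (h1.const_mul (-m)).add (h2.const_mul (m/2))
    simp only [mul_zero, add_zero] at h3
    refine h3.congr (fun s => by ring)
  rw [integral_Ioi_of_hasDerivAt_of_tendsto' hderiv hint htend]
  field_simp
  ring

lemma ptwise (m s : ℝ) (hm : 0 ≤ m) (hs : 2*m+1 ≤ s) :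
    |s^2/Real.sqrt (1+s^2-2*m/s) - s^2/Real.sqrt (1+s^2) - (m/s^2 - 3*m/(2*s^4))|
      ≤ (2*m^2+4*m)/s^5 := by
  have h1 := aux1 m s hm hs
  have h2 := aux2 m s hm (by linarith)
  have hs0 : (0:ℝ) < s := by linarith
  have heq : s^2/Real.sqrt (1+s^2-2*m/s) - s^2/Real.sqrt (1+s^2) - (m/s^2 - 3*m/(2*s^4))
      = (s^2/Real.sqrt (1+s^2-2*m/s) - s^2/Real.sqrt (1+s^2) - m*s/(Real.sqrt (1+s^2))^3)
        + (m*s/(Real.sqrt (1+s^2))^3 - (m/s^2 - 3*m/(2*s^4))) := by ring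
  rw [heq]
  calc |_ + _| ≤ _ + _ := abs_add_le _ _
    _ ≤ 2*m^2/s^5 + 4*m/s^5 := add_le_add h1 h2
    _ = (2*m^2+4*m)/s^5 := by ring

end AuxLemmas

/-- expansion of the tail integral
`4π ∫_R^∞ s² [(1+s²-2m/s)^(-1/2) - (1+s²)^(-1/2)] ds
  = 4πm R⁻¹ - 2πm R⁻³ + O(R⁻⁴)` as `R → ∞`, for fixed `m ≥ 0`. -/
theorem tail_integral_expansion (m : ℝ) (hm : 0 ≤ m) :
    ∃ C > (0:ℝ), ∃ R₀ : ℝ, R₀ > 2 * m ∧ R₀ > 0 ∧ ∀ R ≥ R₀,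
      |4 * π * (∫ s in Set.Ioi R,
            (s ^ 2 / Real.sqrt (1 + s ^ 2 - 2 * m / s) - s ^ 2 / Real.sqrt (1 + s ^ 2)))
          - (4 * π * m / R - 2 * π * m / R ^ 3)| ≤ C / R ^ 4 := by
  have hπ : (0:ℝ) < π := Real.pi_pos
  refine ⟨π*(2*m^2+4*m) + 1, by positivity, 2*m+1, by linarith, by linarith, fun R hR => ?_⟩
  set f : ℝ → ℝ := fun s => s ^ 2 / Real.sqrt (1 + s ^ 2 - 2 * m / s) - s ^ 2 / Real.sqrt (1 + s ^ 2) with hfdef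
  set P : ℝ → ℝ := fun s => m/s^2 - 3*m/(2*s^4) with hPdef
  set K : ℝ := 2*m^2+4*m with hKdef
  have hK0 : 0 ≤ K := by positivity
  have hR0 : (0:ℝ) < R := by linarith
  have hR1 : (1:ℝ) ≤ R := by linarith
  have hmf : Measurable f := by fun_prop
  have hmP : Measurable P := by fun_prop
  have hptw : ∀ s ∈ Set.Ioi R, |f s - P s| ≤ K/s^5 := by
    intro s hs
    have hs' : 2*m+1 ≤ s := le_of_lt (lt_of_le_of_lt hR hs)
    simpa [hfdef, hPdef, hKdef] using ptwise m s hm hs'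
  have hPint : IntegrableOn P (Set.Ioi R) := intPble m hR0
  have hBint : IntegrableOn (fun s : ℝ => K/s^5) (Set.Ioi R) := intBble K hR0
  have hDint : IntegrableOn (fun s => f s - P s) (Set.Ioi R) := by
    apply Integrable.mono' hBint ((hmf.sub hmP).aestronglyMeasurable)
    filter_upwards [ae_restrict_mem measurableSet_Ioi] with s hs
    rw [Real.norm_eq_abs]
    exact hptw s hs
  have hfint : IntegrableOn f (Set.Ioi R) := by
    have h : IntegrableOn (fun s => (f s - P s) + P s) (Set.Ioi R) := hDint.add hPint
    refine h.congr_fun (fun x hx => by ring) measurableSet_Ioi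
  have hsub : (∫ s in Set.Ioi R, f s) - (∫ s in Set.Ioi R, P s)
      = ∫ s in Set.Ioi R, (f s - P s) := (integral_sub hfint hPint).symm
  have hbnd : |∫ s in Set.Ioi R, (f s - P s)| ≤ K/(4*R^4) := by
    calc |∫ s in Set.Ioi R, (f s - P s)|
        ≤ ∫ s in Set.Ioi R, K/s^5 := by
          rw [← Real.norm_eq_abs]
          apply norm_integral_le_of_norm_le hBint
          filter_upwards [ae_restrict_mem measurableSet_Ioi] with s hs
          rw [Real.norm_eq_abs]
          exact hptw s hs
      _ = K/(4*R^4) := intB K hR0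
  have hPval : (∫ s in Set.Ioi R, P s) = m/R - m/(2*R^3) := intP m hR0
  have hrw : 4 * π * (∫ s in Set.Ioi R, f s) - (4 * π * m / R - 2 * π * m / R ^ 3)
      = 4*π*((∫ s in Set.Ioi R, f s) - (m/R - m/(2*R^3))) := by ring
  rw [hrw, ← hPval, hsub, abs_mul, abs_of_pos (by positivity : (0:ℝ) < 4*π)]
  calc 4*π*|∫ s in Set.Ioi R, (f s - P s)| ≤ 4*π*(K/(4*R^4)) := by
        exact mul_le_mul_of_nonneg_left hbnd (by positivity)
    _ = π*K/R^4 := by ring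
    _ ≤ (π*K + 1)/R^4 := by gcongr; linarith
    _ = (π*(2*m^2+4*m) + 1)/R^4 := by rw [hKdef]
end

section
/- For every α > 0 there exist constants C > 0 and A₀ > 0 (depending only on α) such that: for all m ≥ 0 and all A ≥ A₀ with 16πm² ≤ A and m ≤ α A^(1/2), one has | Vol_m(√(A/4π)) − ( (1/2)A − π log A + V_m + π(1 + log π) − 8π^(3/2) m A^(−1/2) ) | ≤ C A^(−1). The point is that the error bound C A^(−1) is uniform in m in the stated range. -/
open Real MeasureTheory Filter

/-- The renormalized volume `V_m = lim_{R→∞} (Vol_m(R) - Vol₀(R))` of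
Schwarzschild-anti-deSitter of mass `m`. -/
noncomputable def renormVol (m : ℝ) : ℝ :=
  limUnder atTop (fun R => sAdSVol m R - hypVol R)

open Set Topology

lemma one_add_sq_pos (s : ℝ) : 0 < 1 + s ^ 2 := by positivity

lemma cont_f0 : Continuous fun s : ℝ => s ^ 2 / Real.sqrt (1 + s ^ 2) := by
  apply Continuous.div (by continuity) (by continuity)
  intro s
  exact (Real.sqrt_pos.2 (one_add_sq_pos s)).ne'

lemma hasDerivAt_sqrt_one_add_sq (x : ℝ) :
    HasDerivAt (fun s : ℝ => Real.sqrt (1 + s ^ 2)) (x / Real.sqrt (1 + x ^ 2)) x := by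
  have h1 : HasDerivAt (fun s : ℝ => 1 + s ^ 2) (2 * x) x := by
    simpa using (hasDerivAt_pow 2 x).const_add 1
  have h2 := (Real.hasDerivAt_sqrt (one_add_sq_pos x).ne').comp x h1
  refine h2.congr_deriv (Eq.symm ?_)
  have hw : Real.sqrt (1 + x ^ 2) ≠ 0 := (Real.sqrt_pos.2 (one_add_sq_pos x)).ne'
  field_simp

lemma hasDerivAt_hypF (x : ℝ) :
    HasDerivAt (fun s : ℝ => (s * Real.sqrt (1 + s ^ 2) - Real.arsinh s) / 2)
      (x ^ 2 / Real.sqrt (1 + x ^ 2)) x := by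
  have hprod : HasDerivAt (fun s : ℝ => s * Real.sqrt (1 + s ^ 2))
      (1 * Real.sqrt (1 + x ^ 2) + x * (x / Real.sqrt (1 + x ^ 2))) x :=
    (hasDerivAt_id x).mul (hasDerivAt_sqrt_one_add_sq x)
  have h := (hprod.sub (Real.hasDerivAt_arsinh x)).div_const 2
  refine h.congr_deriv (Eq.symm ?_)
  have hwpos : 0 < Real.sqrt (1 + x ^ 2) := Real.sqrt_pos.2 (one_add_sq_pos x)
  have hw : Real.sqrt (1 + x ^ 2) ^ 2 = 1 + x ^ 2 := Real.sq_sqrt (one_add_sq_pos x).le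
  field_simp
  nlinarith [hw]

lemma hypVol_eq (R : ℝ) :
    hypVol R = 4 * π * ((R * Real.sqrt (1 + R ^ 2) - Real.arsinh R) / 2) := by
  unfold hypVol
  congr 1
  rw [intervalIntegral.integral_eq_sub_of_hasDerivAt (fun x _ => hasDerivAt_hypF x)
    (cont_f0.intervalIntegrable _ _)]
  simp [Real.arsinh_zero]

-- estimate 1: | R√(1+R²) - (R²+1/2) | ≤ 1/(8R²)
lemma est_sqrt_part {R : ℝ} (hR : 1 ≤ R) :
    |R * Real.sqrt (1 + R ^ 2) - (R ^ 2 + 1 / 2)| ≤ 1 / (8 * R ^ 2) := by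
  have hRpos : (0:ℝ) < R := lt_of_lt_of_le one_pos hR
  set w := Real.sqrt (1 + R ^ 2) with hwdef
  have hw2 : w ^ 2 = 1 + R ^ 2 := Real.sq_sqrt (by positivity)
  have hwR : R ≤ w := (Real.le_sqrt hRpos.le (by positivity)).2 (by nlinarith)
  have hwpos : 0 < w := lt_of_lt_of_le hRpos hwR
  have ht : 0 ≤ R ^ 2 + 1 / 2 - R * w := by nlinarith
  have key : (R ^ 2 + 1 / 2 - R * w) * (R ^ 2 + 1 / 2 + R * w) = 1 / 4 := by nlinarith
  rw [abs_sub_comm, abs_of_nonneg ht, le_div_iff₀ (by positivity)]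
  nlinarith [mul_le_mul_of_nonneg_left hwR (le_of_lt hRpos)]

-- estimate 2: | arsinh R - (log 2 + log R) | ≤ 1/(4R²)
lemma est_arsinh {R : ℝ} (hR : 1 ≤ R) :
    |Real.arsinh R - (Real.log 2 + Real.log R)| ≤ 1 / (4 * R ^ 2) := by
  have hRpos : (0:ℝ) < R := lt_of_lt_of_le one_pos hR
  have harsinh : Real.arsinh R = Real.log (R + Real.sqrt (1 + R ^ 2)) := rfl
  set w := Real.sqrt (1 + R ^ 2) with hwdef
  have hw2 : w ^ 2 = 1 + R ^ 2 := Real.sq_sqrt (by positivity)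
  have hwR : R ≤ w := (Real.le_sqrt hRpos.le (by positivity)).2 (by nlinarith)
  have hwup : w ≤ R + 1 / (2 * R) := by
    have hsq : 1 + R ^ 2 ≤ (R + 1 / (2 * R)) ^ 2 := by
      have : (R + 1 / (2 * R)) ^ 2 = R ^ 2 + 1 + 1 / (4 * R ^ 2) := by
        field_simp; ring
      nlinarith [le_of_lt (show (0:ℝ) < 1 / (4 * R ^ 2) by positivity)]
    have h := Real.sqrt_le_sqrt hsq
    rwa [Real.sqrt_sq (by positivity)] at h
  have hlog2R : Real.log 2 + Real.log R = Real.log (2 * R) :=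
    (Real.log_mul (by norm_num) hRpos.ne').symm
  rw [harsinh, hlog2R]
  have hlow : Real.log (2 * R) ≤ Real.log (R + w) :=
    Real.log_le_log (by positivity) (by linarith)
  have hup : Real.log (R + w) ≤ Real.log (2 * R) + 1 / (4 * R ^ 2) := by
    have h1 : R + w ≤ (2 * R) * (1 + 1 / (4 * R ^ 2)) := by
      have : (2 * R) * (1 + 1 / (4 * R ^ 2)) = 2 * R + 1 / (2 * R) := by
        field_simp; ring
      linarith
    calc Real.log (R + w) ≤ Real.log ((2 * R) * (1 + 1 / (4 * R ^ 2))) :=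
          Real.log_le_log (by positivity) h1
      _ = Real.log (2 * R) + Real.log (1 + 1 / (4 * R ^ 2)) := by
          rw [Real.log_mul (by positivity) (by positivity)]
      _ ≤ Real.log (2 * R) + 1 / (4 * R ^ 2) := by
          have := Real.log_le_sub_one_of_pos (show (0:ℝ) < 1 + 1 / (4 * R ^ 2) by positivity)
          linarith
  rw [abs_le]
  constructor <;> linarith

-- positivity of 1 + s² - 2m/s on [2m, ∞), m ≥ 0
lemma a_pos {m s : ℝ} (hm : 0 ≤ m) (hs : 2 * m ≤ s) : 0 < 1 + s ^ 2 - 2 * m / s := by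
  rcases eq_or_lt_of_le hm with h | h
  · simp [← h]; positivity
  · have hspos : 0 < s := lt_of_lt_of_le (by linarith) hs
    have : 2 * m / s ≤ 1 := (div_le_one hspos).2 hs
    nlinarith

lemma a_ge_sq {m s : ℝ} (hm : 0 ≤ m) (hs : 2 * m ≤ s) (hspos : 0 < s) :
    s ^ 2 ≤ 1 + s ^ 2 - 2 * m / s := by
  have : 2 * m / s ≤ 1 := (div_le_one hspos).2 hs
  linarith

-- continuity on Ici (2m)
lemma cont_fm {m : ℝ} (hm : 0 ≤ m) :
    ContinuousOn (fun s => s ^ 2 / Real.sqrt (1 + s ^ 2 - 2 * m / s)) (Ici (2 * m)) := by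
  rcases eq_or_lt_of_le hm with h | h
  · have : (fun s : ℝ => s ^ 2 / Real.sqrt (1 + s ^ 2 - 2 * m / s))
        = fun s : ℝ => s ^ 2 / Real.sqrt (1 + s ^ 2) := by
      funext s; rw [← h]; norm_num
    rw [this]
    exact (Continuous.div (by continuity) (by continuity)
      (fun s => (Real.sqrt_pos.2 (by positivity)).ne')).continuousOn
  · have hne : ∀ s ∈ Ici (2 * m), s ≠ 0 := fun s hs => by
      have : (0:ℝ) < 2 * m := by linarith
      exact (lt_of_lt_of_le this hs).ne'
    apply ContinuousOn.div (by fun_prop)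
    · apply ContinuousOn.sqrt
      apply ContinuousOn.sub (by fun_prop)
      exact ContinuousOn.div continuousOn_const continuousOn_id hne
    · intro s hs
      exact (Real.sqrt_pos.2 (a_pos hm hs)).ne'

noncomputable def gdiff (m s : ℝ) : ℝ :=
  s ^ 2 / Real.sqrt (1 + s ^ 2 - 2 * m / s) - s ^ 2 / Real.sqrt (1 + s ^ 2)

lemma a_pos' {m s : ℝ} (hm : 0 ≤ m) (hs : 2 * m ≤ s) (hspos : 0 < s) :
    0 < 1 + s ^ 2 - 2 * m / s := by
  have : 2 * m / s ≤ 1 := (div_le_one hspos).2 hs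
  nlinarith

lemma gdiff_bounds {m s : ℝ} (hm : 0 ≤ m) (hs : 2 * m ≤ s) (hspos : 0 < s) :
    0 ≤ gdiff m s ∧ gdiff m s ≤ 2 * m / (1 + s ^ 2) := by
  have ha : 0 < 1 + s ^ 2 - 2 * m / s := a_pos' hm hs hspos
  have hb : (0:ℝ) < 1 + s ^ 2 := by positivity
  set u := Real.sqrt (1 + s ^ 2 - 2 * m / s) with hudef
  set v := Real.sqrt (1 + s ^ 2) with hvdef
  have hu2 : u ^ 2 = 1 + s ^ 2 - 2 * m / s := Real.sq_sqrt ha.le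
  have hv2 : v ^ 2 = 1 + s ^ 2 := Real.sq_sqrt hb.le
  have hupos : 0 < u := Real.sqrt_pos.2 ha
  have hvpos : 0 < v := Real.sqrt_pos.2 hb
  have huv : u ≤ v := Real.sqrt_le_sqrt (by nlinarith [div_nonneg (by linarith : (0:ℝ) ≤ 2*m) hspos.le])
  have hsu : s ≤ u := by
    rw [hudef]
    exact (Real.le_sqrt hspos.le (by nlinarith)).2 (by
      have : 2 * m / s ≤ 1 := (div_le_one hspos).2 hs
      nlinarith)
  have krel : s * ((v - u) * (v + u)) = 2 * m := by
    have : v ^ 2 - u ^ 2 = 2 * m / s := by rw [hv2, hu2]; ring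
    field_simp at this
    nlinarith [this]
  have hg : gdiff m s = s ^ 2 * (v - u) / (u * v) := by
    rw [gdiff, ← hudef, ← hvdef, div_sub_div _ _ hupos.ne' hvpos.ne']
    congr 1
    ring
  constructor
  · rw [hg]
    exact div_nonneg (mul_nonneg (by positivity) (sub_nonneg.2 huv)) (by positivity)
  · rw [hg, div_le_div_iff₀ (by positivity) (by positivity), ← hv2]
    have expand : 2 * m * (u * v) = (v - u) * (s * v) * ((v + u) * u) := by
      linear_combination (-(u * v)) * krel
    have prodhint : 0 ≤ (v - u) * (s * v) * ((v + u) * u - s * v) := by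
      apply mul_nonneg (mul_nonneg (sub_nonneg.2 huv) (by positivity))
      nlinarith [mul_le_mul_of_nonneg_right hsu hvpos.le]
    nlinarith [expand, prodhint]

-- pointwise tail estimate: |gdiff - m s/((1+s²)√(1+s²))| ≤ 12 m²/s⁵
lemma gdiff_tail_est {m s : ℝ} (hm : 0 ≤ m) (hs : 2 * m ≤ s) (hspos : 0 < s)
    (hcond : 4 * m ≤ s * (1 + s ^ 2)) :
    |gdiff m s - m * s / ((1 + s ^ 2) * Real.sqrt (1 + s ^ 2))| ≤ 12 * m ^ 2 / s ^ 5 := by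
  have ha : 0 < 1 + s ^ 2 - 2 * m / s := a_pos' hm hs hspos
  have hb : (0:ℝ) < 1 + s ^ 2 := by positivity
  set u := Real.sqrt (1 + s ^ 2 - 2 * m / s) with hudef
  set v := Real.sqrt (1 + s ^ 2) with hvdef
  have hu2 : u ^ 2 = 1 + s ^ 2 - 2 * m / s := Real.sq_sqrt ha.le
  have hv2 : v ^ 2 = 1 + s ^ 2 := Real.sq_sqrt hb.le
  have hupos : 0 < u := Real.sqrt_pos.2 ha
  have hvpos : 0 < v := Real.sqrt_pos.2 hb
  have huv : u ≤ v := Real.sqrt_le_sqrt (by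
    nlinarith [div_nonneg (by linarith : (0:ℝ) ≤ 2*m) hspos.le])
  have hsv : s ≤ v := (Real.le_sqrt hspos.le hb.le).2 (by nlinarith)
  have krel : s * ((v - u) * (v + u)) = 2 * m := by
    have : v ^ 2 - u ^ 2 = 2 * m / s := by rw [hv2, hu2]; ring
    field_simp at this
    nlinarith [this]
  -- u ≥ v/2 (indeed 2u² ≥ v²):
  have h2u : v ≤ 2 * u := by
    have h2m : 2 * m / s ≤ (1 + s ^ 2) / 2 := by
      rw [div_le_div_iff₀ hspos (by norm_num)]
      nlinarith
    nlinarith [hu2, hv2]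
  have hmval : m = s * (v ^ 2 - u ^ 2) / 2 := by
    field_simp
    linear_combination -krel
  -- exact identity for the difference
  have hE : gdiff m s - m * s / ((1 + s ^ 2) * Real.sqrt (1 + s ^ 2))
      = s ^ 2 * (v - u) ^ 2 * (u + 2 * v) / (2 * u * v ^ 3) := by
    rw [gdiff, ← hudef, ← hvdef, ← hv2]
    rw [hmval]
    field_simp
    ring
  have hvu : v - u ≤ 2 * m / (s * v) := by
    rw [le_div_iff₀ (by positivity)]
    nlinarith [mul_le_mul_of_nonneg_left hsv (by linarith : (0:ℝ) ≤ v - u)]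
  rw [hE, abs_of_nonneg (by positivity)]
  calc s ^ 2 * (v - u) ^ 2 * (u + 2 * v) / (2 * u * v ^ 3)
      ≤ s ^ 2 * (2 * m / (s * v)) ^ 2 * (3 * v) / (2 * (v / 2) * v ^ 3) := by
        gcongr <;> first
          | positivity
          | linarith
          | exact sub_nonneg.2 huv
      _ = 12 * m ^ 2 / v ^ 5 := by field_simp; ring
      _ ≤ 12 * m ^ 2 / s ^ 5 := by gcongr


lemma cont_gdiff {m : ℝ} (hm : 0 ≤ m) : ContinuousOn (gdiff m) (Ici (2 * m)) :=
  (cont_fm hm).sub cont_f0.continuousOn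

lemma integrableOn_gdiff {m : ℝ} (hm : 0 ≤ m) : IntegrableOn (gdiff m) (Ioi (2 * m)) := by
  apply Integrable.mono' (g := fun s => 2 * m * (1 + s ^ 2)⁻¹)
      ((integrable_inv_one_add_sq.const_mul (2 * m)).integrableOn)
  · exact ((cont_gdiff hm).mono Ioi_subset_Ici_self).aestronglyMeasurable measurableSet_Ioi
  · rw [ae_restrict_iff' measurableSet_Ioi]
    filter_upwards with s hs
    have hspos : 0 < s := lt_of_le_of_lt (by positivity) hs
    obtain ⟨h0, h1⟩ := gdiff_bounds hm (le_of_lt hs) hspos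
    rw [Real.norm_eq_abs, abs_of_nonneg h0]
    rw [div_eq_mul_inv] at h1
    exact h1

lemma intervalIntegrable_fm {m R : ℝ} (hm : 0 ≤ m) (hR : 2 * m ≤ R) :
    IntervalIntegrable (fun s => s ^ 2 / Real.sqrt (1 + s ^ 2 - 2 * m / s))
      volume (2 * m) R := by
  apply ContinuousOn.intervalIntegrable
  apply (cont_fm hm).mono
  rw [uIcc_of_le hR]
  exact Icc_subset_Ici_self

lemma intervalIntegrable_gdiff {m R : ℝ} (hm : 0 ≤ m) (hR : 2 * m ≤ R) :
    IntervalIntegrable (gdiff m) volume (2 * m) R := by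
  apply ContinuousOn.intervalIntegrable
  apply (cont_gdiff hm).mono
  rw [uIcc_of_le hR]
  exact Icc_subset_Ici_self

-- split identity for R ≥ 2m
lemma sAdSVol_split {m R : ℝ} (hm : 0 ≤ m) (hR : 2 * m ≤ R) :
    sAdSVol m R - hypVol R
      = 4 * π * ((∫ s in (2 * m)..R, gdiff m s) - ∫ s in (0:ℝ)..(2 * m),
          s ^ 2 / Real.sqrt (1 + s ^ 2)) := by
  have h1 : (∫ s in (2 * m)..R, s ^ 2 / Real.sqrt (1 + s ^ 2 - 2 * m / s))
      = (∫ s in (2 * m)..R, gdiff m s) + ∫ s in (2 * m)..R, s ^ 2 / Real.sqrt (1 + s ^ 2) := by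
    rw [← intervalIntegral.integral_add (intervalIntegrable_gdiff hm hR)
      (cont_f0.intervalIntegrable _ _)]
    apply intervalIntegral.integral_congr
    intro s _
    simp [gdiff]
  have h2 : (∫ s in (0:ℝ)..R, s ^ 2 / Real.sqrt (1 + s ^ 2))
      = (∫ s in (0:ℝ)..(2 * m), s ^ 2 / Real.sqrt (1 + s ^ 2))
        + ∫ s in (2 * m)..R, s ^ 2 / Real.sqrt (1 + s ^ 2) :=
    (intervalIntegral.integral_add_adjacent_intervals (cont_f0.intervalIntegrable _ _)
      (cont_f0.intervalIntegrable _ _)).symm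
  rw [sAdSVol, hypVol, h1, h2]
  ring

lemma renormVol_eq {m : ℝ} (hm : 0 ≤ m) :
    renormVol m = 4 * π * ((∫ s in Ioi (2 * m), gdiff m s) - ∫ s in (0:ℝ)..(2 * m),
        s ^ 2 / Real.sqrt (1 + s ^ 2)) := by
  apply Filter.Tendsto.limUnder_eq
  have h1 : Tendsto (fun R => ∫ s in (2 * m)..R, gdiff m s) atTop
      (𝓝 (∫ s in Ioi (2 * m), gdiff m s)) :=
    intervalIntegral_tendsto_integral_Ioi _ (integrableOn_gdiff hm) tendsto_id
  have h2 := ((h1.sub_const (∫ s in (0:ℝ)..(2 * m),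
      s ^ 2 / Real.sqrt (1 + s ^ 2))).const_mul (4 * π))
  apply Tendsto.congr' _ h2
  filter_upwards [eventually_ge_atTop (2 * m)] with R hR
  exact (sAdSVol_split hm hR).symm

-- Ioi splitting
lemma gdiff_Ioi_split {m R : ℝ} (hm : 0 ≤ m) (hR : 2 * m ≤ R) :
    (∫ s in Ioi (2 * m), gdiff m s)
      = (∫ s in (2 * m)..R, gdiff m s) + ∫ s in Ioi R, gdiff m s := by
  rw [← Ioc_union_Ioi_eq_Ioi hR, MeasureTheory.setIntegral_union (Ioc_disjoint_Ioi le_rfl)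
    measurableSet_Ioi ((integrableOn_gdiff hm).mono_set Ioc_subset_Ioi_self)
    ((integrableOn_gdiff hm).mono_set (Ioi_subset_Ioi hR)),
    intervalIntegral.integral_of_le hR]

-- improper integral of h s = m s/((1+s²)√(1+s²)) over Ioi R
lemma hfun_deriv {m : ℝ} (x : ℝ) :
    HasDerivAt (fun s : ℝ => -(m * (Real.sqrt (1 + s ^ 2))⁻¹))
      (m * x / ((1 + x ^ 2) * Real.sqrt (1 + x ^ 2))) x := by
  have hwpos : 0 < Real.sqrt (1 + x ^ 2) := Real.sqrt_pos.2 (one_add_sq_pos x)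
  have hw2 : Real.sqrt (1 + x ^ 2) ^ 2 = 1 + x ^ 2 := Real.sq_sqrt (one_add_sq_pos x).le
  have h := (((hasDerivAt_sqrt_one_add_sq x).inv hwpos.ne').const_mul m).neg
  refine h.congr_deriv (Eq.symm ?_)
  rw [← hw2]
  field_simp
  rw [Real.sqrt_sq hwpos.le]

lemma hfun_tendsto (m : ℝ) :
    Tendsto (fun s : ℝ => -(m * (Real.sqrt (1 + s ^ 2))⁻¹)) atTop (𝓝 0) := by
  have h1 : Tendsto (fun s : ℝ => Real.sqrt (1 + s ^ 2)) atTop atTop := by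
    apply tendsto_atTop_atTop.2
    intro b
    refine ⟨max b 0, fun a ha => ?_⟩
    have h0 : 0 ≤ a := le_trans (le_max_right b 0) ha
    calc b ≤ a := le_trans (le_max_left b 0) ha
      _ = Real.sqrt (a ^ 2) := (Real.sqrt_sq h0).symm
      _ ≤ Real.sqrt (1 + a ^ 2) := Real.sqrt_le_sqrt (by linarith)
  have := (h1.inv_tendsto_atTop.const_mul m).neg
  simpa using this

lemma integral_hfun {m R : ℝ} (hm : 0 ≤ m) (hR : 0 < R) :
    ∫ s in Ioi R, m * s / ((1 + s ^ 2) * Real.sqrt (1 + s ^ 2))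
      = m / Real.sqrt (1 + R ^ 2) := by
  rw [integral_Ioi_of_hasDerivAt_of_nonneg' (fun x _ => hfun_deriv x)
    (fun x hx => by
      have : (0:ℝ) < x := lt_trans hR hx
      positivity)
    (hfun_tendsto m)]
  rw [div_eq_mul_inv]
  ring

lemma integrableOn_hfun {m R : ℝ} (hm : 0 ≤ m) (hR : 0 < R) :
    IntegrableOn (fun s => m * s / ((1 + s ^ 2) * Real.sqrt (1 + s ^ 2))) (Ioi R) :=
  integrableOn_Ioi_deriv_of_nonneg' (fun x _ => hfun_deriv x)
    (fun x hx => by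
      have : (0:ℝ) < x := lt_trans hR hx
      positivity)
    (hfun_tendsto m)

-- improper integral of 12 m²/s⁵ over Ioi R
lemma psi_deriv {c x : ℝ} (hx : x ≠ 0) :
    HasDerivAt (fun s : ℝ => -(c * ((s ^ 4)⁻¹ / 4))) (c / x ^ 5) x := by
  have h := ((((hasDerivAt_pow 4 x).inv (pow_ne_zero 4 hx)).div_const 4).const_mul c).neg
  refine h.congr_deriv (Eq.symm ?_)
  field_simp
  ring

lemma psi_tendsto (c : ℝ) : Tendsto (fun s : ℝ => -(c * ((s ^ 4)⁻¹ / 4))) atTop (𝓝 0) := by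
  have h1 : Tendsto (fun s : ℝ => s ^ 4) atTop atTop := tendsto_pow_atTop (by norm_num)
  have := ((h1.inv_tendsto_atTop.div_const 4).const_mul c).neg
  simpa using this

lemma integral_psi {c R : ℝ} (hc : 0 ≤ c) (hR : 0 < R) :
    ∫ s in Ioi R, c / s ^ 5 = c * ((R ^ 4)⁻¹ / 4) := by
  rw [integral_Ioi_of_hasDerivAt_of_nonneg'
    (fun x hx => psi_deriv (by have := lt_of_lt_of_le hR hx; positivity))
    (fun x hx => by have : (0:ℝ) < x := lt_trans hR hx; positivity)
    (psi_tendsto c)]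
  ring

lemma integrableOn_psi {c R : ℝ} (hc : 0 ≤ c) (hR : 0 < R) :
    IntegrableOn (fun s => c / s ^ 5) (Ioi R) :=
  integrableOn_Ioi_deriv_of_nonneg'
    (fun x hx => psi_deriv (by have := lt_of_lt_of_le hR hx; positivity))
    (fun x hx => by have : (0:ℝ) < x := lt_trans hR hx; positivity)
    (psi_tendsto c)


lemma tail_est {m R : ℝ} (hm : 0 ≤ m) (hR1 : 1 ≤ R) (h2m : 2 * m ≤ R)
    (h4m : 4 * m ≤ R ^ 2) :
    |(∫ s in Ioi R, gdiff m s) - m / Real.sqrt (1 + R ^ 2)| ≤ 3 * m ^ 2 / R ^ 4 := by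
  have hRpos : (0:ℝ) < R := lt_of_lt_of_le one_pos hR1
  have hgint : IntegrableOn (gdiff m) (Ioi R) :=
    (integrableOn_gdiff hm).mono_set (Ioi_subset_Ioi h2m)
  rw [← integral_hfun hm hRpos, ← integral_sub hgint (integrableOn_hfun hm hRpos)]
  have hbound := MeasureTheory.norm_integral_le_of_norm_le
    (f := fun s => gdiff m s - m * s / ((1 + s ^ 2) * Real.sqrt (1 + s ^ 2)))
    (g := fun s => 12 * m ^ 2 / s ^ 5)
    (μ := volume.restrict (Ioi R))
    (integrableOn_psi (by positivity) hRpos) ?_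
  · rw [Real.norm_eq_abs] at hbound
    calc |∫ s in Ioi R, (gdiff m s - m * s / ((1 + s ^ 2) * Real.sqrt (1 + s ^ 2)))|
        ≤ ∫ s in Ioi R, 12 * m ^ 2 / s ^ 5 := hbound
      _ = 12 * m ^ 2 * ((R ^ 4)⁻¹ / 4) := integral_psi (by positivity) hRpos
      _ = 3 * m ^ 2 / R ^ 4 := by field_simp; ring
  · rw [ae_restrict_iff' measurableSet_Ioi]
    filter_upwards with s hs
    have hs1 : 1 < s := lt_of_le_of_lt hR1 hs
    have hspos : (0:ℝ) < s := by linarith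
    rw [Real.norm_eq_abs]
    apply gdiff_tail_est hm (le_trans h2m (le_of_lt hs)) hspos
    nlinarith [sq_nonneg s, le_of_lt (mem_Ioi.mp hs)]


-- estimate for 1/R - 1/√(1+R²)
lemma est_invsqrt {R : ℝ} (hR : 1 ≤ R) :
    0 ≤ 1 / R - 1 / Real.sqrt (1 + R ^ 2) ∧
      1 / R - 1 / Real.sqrt (1 + R ^ 2) ≤ 1 / (2 * R ^ 3) := by
  have hRpos : (0:ℝ) < R := lt_of_lt_of_le one_pos hR
  set w := Real.sqrt (1 + R ^ 2) with hwdef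
  have hw2 : w ^ 2 = 1 + R ^ 2 := Real.sq_sqrt (by positivity)
  have hwR : R ≤ w := (Real.le_sqrt hRpos.le (by positivity)).2 (by nlinarith)
  have hwpos : 0 < w := lt_of_lt_of_le hRpos hwR
  have hwup : w ≤ R + 1 / (2 * R) := by
    have hsq : 1 + R ^ 2 ≤ (R + 1 / (2 * R)) ^ 2 := by
      have : (R + 1 / (2 * R)) ^ 2 = R ^ 2 + 1 + 1 / (4 * R ^ 2) := by
        field_simp; ring
      nlinarith [le_of_lt (show (0:ℝ) < 1 / (4 * R ^ 2) by positivity)]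
    have h := Real.sqrt_le_sqrt hsq
    rwa [Real.sqrt_sq (by positivity)] at h
  constructor
  · have : 1 / w ≤ 1 / R := by gcongr
    linarith
  · have heq : 1 / R - 1 / w = (w - R) / (R * w) := by field_simp
    rw [heq]
    calc (w - R) / (R * w) ≤ (1 / (2 * R)) / (R * R) := by
          gcongr <;> first | positivity | linarith
      _ = 1 / (2 * R ^ 3) := by field_simp

set_option maxHeartbeats 1000000 in
/-- uniform-in-mass expansion of the volume of the centered
coordinate ball of boundary area `A` in Schwarzschild-anti-deSitter of mass
`m`, with error `C·A⁻¹` uniform over `0 ≤ m ≤ α√A`. -/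
theorem sAdS_ball_volume_expansion_uniform (α : ℝ) (hα : 0 < α) :
    ∃ C > (0:ℝ), ∃ A₀ > (0:ℝ), ∀ m : ℝ, 0 ≤ m → ∀ A ≥ A₀,
      16 * π * m ^ 2 ≤ A → m ≤ α * A ^ ((1:ℝ)/2) →
      |sAdSVol m (Real.sqrt (A / (4 * π)))
          - ((1 / 2) * A - π * Real.log A + renormVol m + π * (1 + Real.log π)
              - 8 * π ^ ((3:ℝ)/2) * m * A ^ (-(1:ℝ)/2))|
        ≤ C / A := by
  have hπ : (0:ℝ) < π := Real.pi_pos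
  set κ : ℝ := 2 * Real.sqrt π * α with hκdef
  clear_value κ
  have hκpos : 0 < κ := by
    rw [hκdef]
    have : 0 < Real.sqrt π := Real.sqrt_pos.2 hπ
    positivity
  refine ⟨4 * π * (π + 2 * π * κ + 12 * π * κ ^ 2) + 1, by positivity,
    4 * π + 64 * π * κ ^ 2 + 1, by positivity, ?_⟩
  intro m hm A hA hA16 hmα
  have hApos : (0:ℝ) < A := lt_of_lt_of_le (by positivity) hA
  set R := Real.sqrt (A / (4 * π)) with hRdef
  clear_value R
  have hR2 : R ^ 2 = A / (4 * π) := by rw [hRdef]; exact Real.sq_sqrt (by positivity)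
  have hRpos : 0 < R := by rw [hRdef]; exact Real.sqrt_pos.2 (by positivity)
  have hAR : A = 4 * π * R ^ 2 := by rw [hR2]; field_simp
  have hR1 : (1:ℝ) ≤ R := by
    rw [hRdef]
    apply (Real.le_sqrt zero_le_one (by positivity)).2
    rw [one_pow, le_div_iff₀ (by positivity)]
    nlinarith [sq_nonneg κ]
  have h2mR : 2 * m ≤ R := by
    rw [hRdef]
    apply (Real.le_sqrt (by positivity) (by positivity)).2
    rw [le_div_iff₀ (by positivity)]
    nlinarith
  have hsqrtπ : Real.sqrt π ^ 2 = π := Real.sq_sqrt hπ.le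
  have hsqrtπpos : 0 < Real.sqrt π := Real.sqrt_pos.2 hπ
  have hsqrtA : Real.sqrt A = 2 * Real.sqrt π * R := by
    rw [show A = (2 * Real.sqrt π * R) ^ 2 by rw [hAR]; nlinarith [hsqrtπ]]
    exact Real.sqrt_sq (by positivity)
  have hmκ : m ≤ κ * R := by
    have h12 : A ^ ((1:ℝ)/2) = Real.sqrt A := (Real.sqrt_eq_rpow A).symm
    rw [h12, hsqrtA] at hmα
    rw [hκdef]
    linarith
  have h4κR : 4 * κ ≤ R := by
    rw [hRdef]
    apply (Real.le_sqrt (by positivity) (by positivity)).2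
    rw [le_div_iff₀ (by positivity)]
    nlinarith
  have h4m : 4 * m ≤ R ^ 2 := by nlinarith
  -- key identity
  have key1 : sAdSVol m R = hypVol R + renormVol m - 4 * π * ∫ s in Ioi R, gdiff m s := by
    have e1 := sAdSVol_split hm h2mR
    have e2 := renormVol_eq hm
    have e3 := gdiff_Ioi_split hm h2mR
    rw [e3] at e2
    linarith
  -- log identity
  have hlog4 : Real.log 4 = 2 * Real.log 2 := by
    rw [show (4:ℝ) = 2 ^ 2 by norm_num, Real.log_pow]
    push_cast; ring
  have hlog : Real.log A = 2 * Real.log 2 + Real.log π + 2 * Real.log R := by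
    rw [hAR, show (4:ℝ) * π * R ^ 2 = (4 * π) * R ^ 2 by ring,
      Real.log_mul (by positivity) (by positivity),
      Real.log_mul (by norm_num) hπ.ne', Real.log_pow, hlog4]
    push_cast; ring
  -- rpow identity
  have hrpow : 8 * π ^ ((3:ℝ)/2) * m * A ^ (-(1:ℝ)/2) = 4 * π * (m / R) := by
    have h32 : π ^ ((3:ℝ)/2) = π * Real.sqrt π := by
      rw [show (3:ℝ)/2 = 1 + 1/2 by norm_num, Real.rpow_add hπ, Real.rpow_one,
        ← Real.sqrt_eq_rpow]
    have hneg : A ^ (-(1:ℝ)/2) = (Real.sqrt A)⁻¹ := by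
      rw [show -(1:ℝ)/2 = -(1/2) by norm_num, Real.rpow_neg hApos.le,
        ← Real.sqrt_eq_rpow]
    rw [h32, hneg, hsqrtA]
    field_simp
    ring
  -- decomposition
  have hdecomp : sAdSVol m R
      - ((1 / 2) * A - π * Real.log A + renormVol m + π * (1 + Real.log π)
          - 8 * π ^ ((3:ℝ)/2) * m * A ^ (-(1:ℝ)/2))
    = (hypVol R - (2 * π * R ^ 2 + π - 2 * π * Real.log R - 2 * π * Real.log 2))
      + 4 * π * m * (1 / R - 1 / Real.sqrt (1 + R ^ 2))
      + (4 * π * (m / Real.sqrt (1 + R ^ 2) - ∫ s in Ioi R, gdiff m s)) := by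
    rw [key1, hrpow, hlog, hAR]
    ring
  -- estimates
  have hE1 : |hypVol R - (2 * π * R ^ 2 + π - 2 * π * Real.log R - 2 * π * Real.log 2)|
      ≤ π / R ^ 2 := by
    have h1 := est_sqrt_part hR1
    have h2 := est_arsinh hR1
    rw [hypVol_eq]
    have heq : 4 * π * ((R * Real.sqrt (1 + R ^ 2) - Real.arsinh R) / 2)
        - (2 * π * R ^ 2 + π - 2 * π * Real.log R - 2 * π * Real.log 2)
      = 2 * π * (R * Real.sqrt (1 + R ^ 2) - (R ^ 2 + 1 / 2))
        - 2 * π * (Real.arsinh R - (Real.log 2 + Real.log R)) := by ring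
    rw [heq]
    calc |2 * π * (R * Real.sqrt (1 + R ^ 2) - (R ^ 2 + 1 / 2))
          - 2 * π * (Real.arsinh R - (Real.log 2 + Real.log R))|
        ≤ |2 * π * (R * Real.sqrt (1 + R ^ 2) - (R ^ 2 + 1 / 2))|
          + |2 * π * (Real.arsinh R - (Real.log 2 + Real.log R))| := abs_sub _ _
      _ = 2 * π * |R * Real.sqrt (1 + R ^ 2) - (R ^ 2 + 1 / 2)|
          + 2 * π * |Real.arsinh R - (Real.log 2 + Real.log R)| := by
          have habs : ∀ x : ℝ, |2 * π * x| = 2 * π * |x| := fun x => by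
            rw [abs_mul]; congr 1; exact abs_of_nonneg (by positivity)
          rw [habs, habs]
      _ ≤ 2 * π * (1 / (8 * R ^ 2)) + 2 * π * (1 / (4 * R ^ 2)) :=
          add_le_add (mul_le_mul_of_nonneg_left h1 (by positivity))
            (mul_le_mul_of_nonneg_left h2 (by positivity))
      _ ≤ π / R ^ 2 := by
          have h3 : 2 * π * (1 / (8 * R ^ 2)) + 2 * π * (1 / (4 * R ^ 2))
              = 3 * π / (4 * R ^ 2) := by field_simp; ring
          rw [h3, div_le_div_iff₀ (by positivity) (by positivity)]
          nlinarith
  have hE2a : |4 * π * m * (1 / R - 1 / Real.sqrt (1 + R ^ 2))| ≤ 2 * π * κ / R ^ 2 := by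
    obtain ⟨hlo, hhi⟩ := est_invsqrt hR1
    rw [abs_of_nonneg (by positivity)]
    calc 4 * π * m * (1 / R - 1 / Real.sqrt (1 + R ^ 2))
        ≤ 4 * π * (κ * R) * (1 / (2 * R ^ 3)) := by
          apply mul_le_mul (by gcongr) hhi hlo (by positivity)
      _ = 2 * π * κ / R ^ 2 := by field_simp; ring
  have hE2b : |4 * π * (m / Real.sqrt (1 + R ^ 2) - ∫ s in Ioi R, gdiff m s)|
      ≤ 12 * π * κ ^ 2 / R ^ 2 := by
    have ht := tail_est hm hR1 h2mR h4m
    rw [abs_mul, abs_of_nonneg (by positivity : (0:ℝ) ≤ 4 * π), abs_sub_comm]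
    calc 4 * π * |(∫ s in Ioi R, gdiff m s) - m / Real.sqrt (1 + R ^ 2)|
        ≤ 4 * π * (3 * m ^ 2 / R ^ 4) := by gcongr
      _ ≤ 4 * π * (3 * (κ * R) ^ 2 / R ^ 4) := by gcongr
      _ = 12 * π * κ ^ 2 / R ^ 2 := by field_simp; ring
  -- put together
  have hfinal : |sAdSVol m R
      - ((1 / 2) * A - π * Real.log A + renormVol m + π * (1 + Real.log π)
          - 8 * π ^ ((3:ℝ)/2) * m * A ^ (-(1:ℝ)/2))|
      ≤ (π + 2 * π * κ + 12 * π * κ ^ 2) / R ^ 2 := by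
    rw [hdecomp]
    calc |(hypVol R - (2 * π * R ^ 2 + π - 2 * π * Real.log R - 2 * π * Real.log 2))
          + 4 * π * m * (1 / R - 1 / Real.sqrt (1 + R ^ 2))
          + (4 * π * (m / Real.sqrt (1 + R ^ 2) - ∫ s in Ioi R, gdiff m s))|
        ≤ |(hypVol R - (2 * π * R ^ 2 + π - 2 * π * Real.log R - 2 * π * Real.log 2))
          + 4 * π * m * (1 / R - 1 / Real.sqrt (1 + R ^ 2))|
          + |4 * π * (m / Real.sqrt (1 + R ^ 2) - ∫ s in Ioi R, gdiff m s)| := abs_add_le _ _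
      _ ≤ |hypVol R - (2 * π * R ^ 2 + π - 2 * π * Real.log R - 2 * π * Real.log 2)|
          + |4 * π * m * (1 / R - 1 / Real.sqrt (1 + R ^ 2))|
          + |4 * π * (m / Real.sqrt (1 + R ^ 2) - ∫ s in Ioi R, gdiff m s)| := by
          have := abs_add_le (hypVol R - (2 * π * R ^ 2 + π - 2 * π * Real.log R
            - 2 * π * Real.log 2)) (4 * π * m * (1 / R - 1 / Real.sqrt (1 + R ^ 2)))
          linarith
      _ ≤ π / R ^ 2 + 2 * π * κ / R ^ 2 + 12 * π * κ ^ 2 / R ^ 2 := by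
          linarith [hE1, hE2a, hE2b]
      _ = (π + 2 * π * κ + 12 * π * κ ^ 2) / R ^ 2 := by ring
  have hconv : (π + 2 * π * κ + 12 * π * κ ^ 2) / R ^ 2
      = 4 * π * (π + 2 * π * κ + 12 * π * κ ^ 2) / A := by
    rw [hAR]
    field_simp
  calc |sAdSVol m R - _| ≤ (π + 2 * π * κ + 12 * π * κ ^ 2) / R ^ 2 := hfinal
    _ = 4 * π * (π + 2 * π * κ + 12 * π * κ ^ 2) / A := hconv
    _ ≤ (4 * π * (π + 2 * π * κ + 12 * π * κ ^ 2) + 1) / A := by gcongr; linarith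
end

section
/- The function m ↦ V_m + 8πm² is strictly increasing on [0, ∞). In particular, since V_0 = 0, one has V_m + 8πm² > 0 for every m > 0. (Here 8πm² = (1/2)·16πm² is half the area of the horizon sphere {s = 2m} of Schwarzschild–anti-deSitter of mass m, so this is the sharp renormalized volume comparison V(M̄_m, ḡ_m) + (1/2)·Area(∂M̄_m) > 0 for the exact Schwarzschild-AdS model.) -/
open Real MeasureTheory Filter
open scoped Topology

open Set

noncomputable section

private lemma pcub_strictMono : StrictMono (fun u : ℝ => u ^ 3 + u) := by
  intro a b h
  simp only
  nlinarith [sq_nonneg (a + b), sq_nonneg a, sq_nonneg b, sq_nonneg (a - b)]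

private lemma pcub_surj : Function.Surjective (fun u : ℝ => u ^ 3 + u) := by
  intro c
  have h1 : (-(1 + |c|)) ≤ (1 + |c|) := by
    have := abs_nonneg c; linarith
  have hc : c ∈ Icc ((fun u : ℝ => u ^ 3 + u) (-(1 + |c|))) ((fun u : ℝ => u ^ 3 + u) (1 + |c|)) := by
    constructor <;> simp only <;>
      nlinarith [abs_nonneg c, neg_abs_le c, le_abs_self c, sq_nonneg (1 + |c|)]
  have := intermediate_value_Icc h1 ((continuous_pow 3).add continuous_id).continuousOn hc
  obtain ⟨u, _, hu⟩ := this
  exact ⟨u, hu⟩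

/-- inverse of `u ↦ u^3 + u` as an order isomorphism -/
private def pcubIso : ℝ ≃o ℝ :=
  StrictMono.orderIsoOfSurjective _ pcub_strictMono pcub_surj

/-- the inverse function of `u ↦ u^3 + u` -/
def psi : ℝ → ℝ := pcubIso.symm

lemma psi_p (u : ℝ) : psi (u ^ 3 + u) = u :=
  StrictMono.orderIsoOfSurjective_symm_apply_self _ pcub_strictMono pcub_surj u

lemma p_psi (c : ℝ) : (psi c) ^ 3 + psi c = c := by
  have h : pcubIso (pcubIso.symm c) = c := pcubIso.apply_symm_apply c
  rwa [show ⇑pcubIso = fun u : ℝ => u ^ 3 + u from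
    StrictMono.coe_orderIsoOfSurjective _ pcub_strictMono pcub_surj] at h

lemma psi_strictMono : StrictMono psi := pcubIso.symm.strictMono

lemma psi_continuous : Continuous psi := pcubIso.symm.continuous

lemma psi_tendsto_s9 : Tendsto psi atTop atTop := pcubIso.symm.tendsto_atTop

lemma pcub_tendsto : Tendsto (fun u : ℝ => u ^ 3 + u) atTop atTop := by
  have h := pcubIso.tendsto_atTop
  rwa [show ⇑pcubIso = fun u : ℝ => u ^ 3 + u from
    StrictMono.coe_orderIsoOfSurjective _ pcub_strictMono pcub_surj] at h

lemma psi_zero : psi 0 = 0 := by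
  have := psi_p 0; simpa using this

lemma psi_nonneg {c : ℝ} (hc : 0 ≤ c) : 0 ≤ psi c := by
  rw [← psi_zero]; exact (psi_strictMono.le_iff_le).2 hc

lemma psi_pos {c : ℝ} (hc : 0 < c) : 0 < psi c := by
  rw [← psi_zero]; exact psi_strictMono hc

attribute [irreducible] psi

lemma psi_hasDerivAt (c : ℝ) : HasDerivAt psi (3 * (psi c) ^ 2 + 1)⁻¹ c := by
  have hf : HasDerivAt (fun u : ℝ => u ^ 3 + u) (3 * (psi c) ^ 2 + 1) (psi c) := by
    have h1 := (hasDerivAt_pow 3 (psi c)).add (hasDerivAt_id' (psi c))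
    norm_num at h1
    exact h1
  have hne : (3 * (psi c) ^ 2 + 1) ≠ 0 := by positivity
  exact HasDerivAt.of_local_left_inverse psi_continuous.continuousAt hf hne
    (Filter.Eventually.of_forall fun y => p_psi y)

end
noncomputable section

/-- The Schwarzschild area coordinate as a function of matched hyperbolic coordinate. -/
def Scoord (m u : ℝ) : ℝ := psi (u ^ 3 + u + 2 * m)

lemma Scoord_spec (m u : ℝ) : (Scoord m u) ^ 3 + Scoord m u = u ^ 3 + u + 2 * m :=
  p_psi _

lemma Scoord_continuous (m : ℝ) : Continuous (Scoord m) :=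
  psi_continuous.comp (by continuity)

lemma Scoord_hasDerivAt (m u : ℝ) :
    HasDerivAt (Scoord m) ((3 * u ^ 2 + 1) / (3 * (Scoord m u) ^ 2 + 1)) u := by
  have h1 : HasDerivAt (fun u : ℝ => u ^ 3 + u + 2 * m) (3 * u ^ 2 + 1) u := by
    have := ((hasDerivAt_pow 3 u).add (hasDerivAt_id u)).add_const (2 * m)
    simpa using this
  have h2 := (psi_hasDerivAt (u ^ 3 + u + 2 * m)).comp u h1
  rw [show (psi ∘ fun u : ℝ => u ^ 3 + u + 2 * m) = Scoord m from rfl] at h2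
  simpa [Scoord, div_eq_inv_mul] using h2

lemma le_Scoord {m u : ℝ} (hm : 0 ≤ m) : u ≤ Scoord m u := by
  have h := psi_strictMono.monotone (show u ^ 3 + u ≤ u ^ 3 + u + 2 * m by linarith)
  calc u = psi (u ^ 3 + u) := (psi_p u).symm
    _ ≤ Scoord m u := h

lemma Scoord_mono_m {m₁ m₂ u : ℝ} (h : m₁ ≤ m₂) : Scoord m₁ u ≤ Scoord m₂ u :=
  psi_strictMono.monotone (by linarith)

lemma Scoord_pos {m u : ℝ} (hm : 0 ≤ m) (hu : 0 < u) : 0 < Scoord m u :=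
  lt_of_lt_of_le hu (le_Scoord hm)

/-- Matched integrand. -/
def Hfun (s u : ℝ) : ℝ :=
  s ^ 2 * Real.sqrt s * (3 * u ^ 2 + 1) / ((3 * s ^ 2 + 1) * Real.sqrt (u ^ 3 + u))

def Dfun (m u : ℝ) : ℝ := Hfun (Scoord m u) u - u ^ 2 / Real.sqrt (1 + u ^ 2)

def u0 (m : ℝ) : ℝ := psi (8 * m ^ 3)

lemma u0_nonneg {m : ℝ} (hm : 0 ≤ m) : 0 ≤ u0 m := psi_nonneg (by positivity)

lemma u0_pos {m : ℝ} (hm : 0 < m) : 0 < u0 m := psi_pos (by positivity)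

lemma u0_lt_two_mul {m : ℝ} (hm : 0 < m) : u0 m < 2 * m := by
  have : (8 : ℝ) * m ^ 3 < (2 * m) ^ 3 + 2 * m := by nlinarith
  have h := psi_strictMono this
  rwa [psi_p] at h

lemma Scoord_u0 (m : ℝ) : Scoord m (u0 m) = 2 * m := by
  rw [Scoord, u0, p_psi, show (8 : ℝ) * m ^ 3 + 2 * m = (2 * m) ^ 3 + 2 * m by ring, psi_p]

lemma u0_mono {a b : ℝ} (ha : 0 ≤ a) (h : a ≤ b) : u0 a ≤ u0 b :=
  psi_strictMono.monotone (by nlinarith [pow_le_pow_left₀ ha h 3])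

/-- `Hfun u u` is the hyperbolic integrand. -/
lemma Hfun_self {u : ℝ} (hu : 0 < u) : Hfun u u = u ^ 2 / Real.sqrt (1 + u ^ 2) := by
  have h1 : u ^ 3 + u = u * (1 + u ^ 2) := by ring
  have hsu : Real.sqrt u ≠ 0 := by positivity
  have hs2 : Real.sqrt (1 + u ^ 2) ≠ 0 := by positivity
  rw [Hfun, h1, Real.sqrt_mul hu.le]
  field_simp

/-- `Hfun` is monotone in `s`. -/
lemma Hfun_mono_s {s₁ s₂ u : ℝ} (hu : 0 < u) (h1 : 0 < s₁) (h12 : s₁ ≤ s₂) :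
    Hfun s₁ u ≤ Hfun s₂ u := by
  have hQ : 0 < Real.sqrt (u ^ 3 + u) := Real.sqrt_pos.2 (by positivity)
  have hd1 : (0:ℝ) < (3 * s₁ ^ 2 + 1) * Real.sqrt (u ^ 3 + u) := by positivity
  have hd2 : (0:ℝ) < (3 * s₂ ^ 2 + 1) * Real.sqrt (u ^ 3 + u) := by positivity
  rw [Hfun, Hfun, div_le_div_iff₀ hd1 hd2]
  have key : s₁ ^ 2 * Real.sqrt s₁ * (3 * s₂ ^ 2 + 1) ≤ s₂ ^ 2 * Real.sqrt s₂ * (3 * s₁ ^ 2 + 1) := by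
    set a := Real.sqrt s₁ with ha
    set b := Real.sqrt s₂ with hb
    have hab : a ≤ b := Real.sqrt_le_sqrt h12
    have ha0 : 0 < a := Real.sqrt_pos.2 h1
    have hs1 : s₁ = a ^ 2 := (Real.sq_sqrt h1.le).symm
    have hs2 : s₂ = b ^ 2 := (Real.sq_sqrt (h1.le.trans h12)).symm
    rw [hs1, hs2]
    have k1 : a ^ 5 ≤ b ^ 5 := pow_le_pow_left₀ ha0.le hab 5
    have k2 : 3 * a ^ 4 * b ^ 4 * a ≤ 3 * a ^ 4 * b ^ 4 * b :=
      mul_le_mul_of_nonneg_left hab (by positivity)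
    nlinarith [k1, k2]
  have hnn : (0:ℝ) ≤ 3 * u ^ 2 + 1 := by positivity
  calc s₁ ^ 2 * Real.sqrt s₁ * (3 * u ^ 2 + 1) * ((3 * s₂ ^ 2 + 1) * Real.sqrt (u ^ 3 + u))
      = (s₁ ^ 2 * Real.sqrt s₁ * (3 * s₂ ^ 2 + 1)) * ((3 * u ^ 2 + 1) * Real.sqrt (u ^ 3 + u)) := by ring
    _ ≤ (s₂ ^ 2 * Real.sqrt s₂ * (3 * s₁ ^ 2 + 1)) * ((3 * u ^ 2 + 1) * Real.sqrt (u ^ 3 + u)) := by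
        apply mul_le_mul_of_nonneg_right key (by positivity)
    _ = s₂ ^ 2 * Real.sqrt s₂ * (3 * u ^ 2 + 1) * ((3 * s₁ ^ 2 + 1) * Real.sqrt (u ^ 3 + u)) := by ring

lemma Dfun_nonneg {m u : ℝ} (hm : 0 ≤ m) (hu : 0 < u) : 0 ≤ Dfun m u := by
  rw [Dfun, ← Hfun_self hu, sub_nonneg]
  exact Hfun_mono_s hu hu (le_Scoord hm)

lemma Dfun_mono_m {m₁ m₂ u : ℝ} (hm : 0 ≤ m₁) (h : m₁ ≤ m₂) (hu : 0 < u) :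
    Dfun m₁ u ≤ Dfun m₂ u := by
  rw [Dfun, Dfun]
  have := Hfun_mono_s hu (Scoord_pos hm hu) (Scoord_mono_m (u := u) h)
  linarith

lemma Dfun_zero {u : ℝ} (hu : 0 < u) : Dfun 0 u = 0 := by
  have : Scoord 0 u = u := by rw [Scoord]; simpa using psi_p u
  rw [Dfun, this, Hfun_self hu, sub_self]

end
noncomputable section

/-- The hyperbolic volume integrand. -/
def gH (u : ℝ) : ℝ := u ^ 2 / Real.sqrt (1 + u ^ 2)

lemma gH_continuous : Continuous gH := by
  apply Continuous.div (continuous_pow 2)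
    (Real.continuous_sqrt.comp (continuous_const.add (continuous_pow 2)))
  intro x
  show Real.sqrt (1 + x ^ 2) ≠ 0
  positivity

lemma gH_nonneg (u : ℝ) : 0 ≤ gH u := by unfold gH; positivity

lemma gH_le_self {u : ℝ} (hu : 0 ≤ u) : gH u ≤ u := by
  rcases hu.eq_or_lt with rfl | hu0
  · simp [gH]
  · have h1 : u ≤ Real.sqrt (1 + u ^ 2) := by
      rw [show u = Real.sqrt (u ^ 2) from (Real.sqrt_sq hu0.le).symm]
      apply Real.sqrt_le_sqrt
      rw [Real.sq_sqrt (sq_nonneg u)]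
      linarith
    calc gH u ≤ u ^ 2 / u := div_le_div_of_nonneg_left (sq_nonneg u) hu0 h1
      _ = u := by field_simp [sq]

set_option maxHeartbeats 1000000 in
/-- Key quantitative decay bound, abstract version. -/
lemma Dfun_le_aux {m u s : ℝ} (hm : 0 ≤ m) (hu : 0 < u) (hus : u ≤ s)
    (hspec0 : s ^ 3 + s = u ^ 3 + u + 2 * m) :
    Hfun s u - u ^ 2 / Real.sqrt (1 + u ^ 2) ≤ (5 * m / 3) / u ^ 2 := by
  have hs0 : 0 < s := lt_of_lt_of_le hu hus
  set a := Real.sqrt u with hadef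
  set b := Real.sqrt s with hbdef
  set r := Real.sqrt (1 + u ^ 2) with hrdef
  have ha0 : 0 < a := Real.sqrt_pos.2 hu
  have hb0 : 0 < b := Real.sqrt_pos.2 hs0
  have hr0 : 0 < r := Real.sqrt_pos.2 (by positivity)
  have hab : a ≤ b := Real.sqrt_le_sqrt hus
  have hua : u = a ^ 2 := (Real.sq_sqrt hu.le).symm
  have hsb : s = b ^ 2 := (Real.sq_sqrt hs0.le).symm
  set Q := Real.sqrt (u ^ 3 + u) with hQdef
  have hQ0 : 0 < Q := Real.sqrt_pos.2 (by positivity)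
  have hQmul : Q = a * r := by
    rw [hQdef, show u ^ 3 + u = u * (1 + u ^ 2) by ring, Real.sqrt_mul hu.le]
  have hQa : a ^ 3 ≤ Q := by
    rw [hQdef, show a ^ 3 = Real.sqrt ((a ^ 3) ^ 2) from (Real.sqrt_sq (by positivity)).symm]
    apply Real.sqrt_le_sqrt
    have h6 : (a ^ 3) ^ 2 = u ^ 3 := by rw [hua]; ring
    linarith [h6, hu.le]
  have hD : Hfun s u - u ^ 2 / Real.sqrt (1 + u ^ 2)
      = (b ^ 5 * (3 * a ^ 4 + 1) - a ^ 5 * (3 * b ^ 4 + 1)) / ((3 * b ^ 4 + 1) * (a * r)) := by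
    rw [Hfun, ← hQdef, ← hbdef, ← hrdef, hQmul, hua, hsb]
    have har : a * r ≠ 0 := by positivity
    field_simp
  clear_value a b r Q
  have hkey : (b ^ 2 - a ^ 2) * (b ^ 4 + a ^ 2 * b ^ 2 + a ^ 4 + 1) = 2 * m := by
    have hspec := hspec0
    rw [hua, hsb] at hspec
    linear_combination hspec
  have hp2 : a ^ 2 ≤ b ^ 2 := pow_le_pow_left₀ ha0.le hab 2
  have hp4 : a ^ 4 ≤ b ^ 4 := pow_le_pow_left₀ ha0.le hab 4
  have hba : 0 ≤ b ^ 2 - a ^ 2 := sub_nonneg.2 hp2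
  have hN : b ^ 5 * (3 * a ^ 4 + 1) - a ^ 5 * (3 * b ^ 4 + 1) ≤ 5 * m * b ^ 3 := by
    have k1 : a ^ 2 * b ^ 2 ≤ a * b ^ 3 := by nlinarith [mul_nonneg (mul_nonneg ha0.le (sub_nonneg.2 hab)) (sq_nonneg b)]
    have k2 : a ^ 3 * b ≤ a * b ^ 3 := by nlinarith [mul_nonneg (mul_nonneg ha0.le hb0.le) (sub_nonneg.2 hp2)]
    have k3 : a ^ 4 ≤ a * b ^ 3 := by nlinarith [mul_nonneg ha0.le (sub_nonneg.2 (pow_le_pow_left₀ ha0.le hab 3))]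
    have k4 : a * b ^ 3 ≤ b ^ 4 := by nlinarith [mul_nonneg (sub_nonneg.2 hab) (pow_nonneg hb0.le 3)]
    have hFnn : 0 ≤ 3 * b ^ 4 + 3 * a * b ^ 3 - 2 * a ^ 2 * b ^ 2 - 2 * a ^ 3 * b - 2 * a ^ 4 := by
      linarith
    have h1 : 2 * (b ^ 5 - a ^ 5) ≤ 5 * b ^ 3 * (b ^ 2 - a ^ 2) := by
      have hfac : 5 * b ^ 3 * (b ^ 2 - a ^ 2) - 2 * (b ^ 5 - a ^ 5)
          = (b - a) * (3 * b ^ 4 + 3 * a * b ^ 3 - 2 * a ^ 2 * b ^ 2 - 2 * a ^ 3 * b - 2 * a ^ 4) := by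
        ring
      have := mul_nonneg (sub_nonneg.2 hab) hFnn
      linarith [hfac ▸ this]
    have h2 : b ^ 5 * (3 * a ^ 4 + 1) - a ^ 5 * (3 * b ^ 4 + 1)
        ≤ (b ^ 5 - a ^ 5) * (3 * a ^ 4 + 1) := by
      have hx : 0 ≤ a ^ 5 * (b ^ 4 - a ^ 4) :=
        mul_nonneg (pow_nonneg ha0.le 5) (sub_nonneg.2 hp4)
      have hring : (b ^ 5 - a ^ 5) * (3 * a ^ 4 + 1)
          - (b ^ 5 * (3 * a ^ 4 + 1) - a ^ 5 * (3 * b ^ 4 + 1))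
          = 3 * (a ^ 5 * (b ^ 4 - a ^ 4)) := by ring
      linarith
    have h3 : (b ^ 5 - a ^ 5) * (3 * a ^ 4 + 1)
        ≤ (5 / 2 * b ^ 3 * (b ^ 2 - a ^ 2)) * (3 * a ^ 4 + 1) :=
      mul_le_mul_of_nonneg_right (by linarith) (by positivity)
    have hS : 3 * a ^ 4 + 1 ≤ b ^ 4 + a ^ 2 * b ^ 2 + a ^ 4 + 1 := by
      have : a ^ 4 ≤ a ^ 2 * b ^ 2 := by nlinarith [mul_le_mul_of_nonneg_left hp2 (sq_nonneg a)]
      linarith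
    have h4 : (b ^ 2 - a ^ 2) * (3 * a ^ 4 + 1)
        ≤ (b ^ 2 - a ^ 2) * (b ^ 4 + a ^ 2 * b ^ 2 + a ^ 4 + 1) :=
      mul_le_mul_of_nonneg_left hS hba
    have h5 : (5 / 2 * b ^ 3 * (b ^ 2 - a ^ 2)) * (3 * a ^ 4 + 1)
        ≤ (5 / 2 * b ^ 3) * ((b ^ 2 - a ^ 2) * (b ^ 4 + a ^ 2 * b ^ 2 + a ^ 4 + 1)) := by
      have := mul_le_mul_of_nonneg_left h4 (show (0:ℝ) ≤ 5 / 2 * b ^ 3 by positivity)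
      linarith [this]
    calc b ^ 5 * (3 * a ^ 4 + 1) - a ^ 5 * (3 * b ^ 4 + 1)
        ≤ (5 / 2 * b ^ 3) * ((b ^ 2 - a ^ 2) * (b ^ 4 + a ^ 2 * b ^ 2 + a ^ 4 + 1)) := by linarith
      _ = 5 * m * b ^ 3 := by rw [hkey]; ring
  have hden : (0:ℝ) < (3 * b ^ 4 + 1) * (a * r) := by positivity
  rw [← hrdef] at hD
  rw [hD]
  calc (b ^ 5 * (3 * a ^ 4 + 1) - a ^ 5 * (3 * b ^ 4 + 1)) / ((3 * b ^ 4 + 1) * (a * r))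
    _ ≤ (5 * m * b ^ 3) / ((3 * b ^ 4 + 1) * (a * r)) := by gcongr
    _ ≤ (5 * m / 3) / u ^ 2 := by
        rw [div_le_div_iff₀ hden (by positivity : (0:ℝ) < u ^ 2)]
        have e1 : a ^ 3 ≤ a * r := hQmul ▸ hQa
        have e2 : 5 * m * b ^ 3 * u ^ 2 = 5 * m * b ^ 3 * a ^ 4 := by rw [hua]; ring
        rw [e2]
        nlinarith [mul_le_mul_of_nonneg_left e1 (show (0:ℝ) ≤ 5 * m * b ^ 4 by positivity),
          mul_le_mul_of_nonneg_left hab (show (0:ℝ) ≤ 5 * m * a ^ 3 * b ^ 3 by positivity),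
          mul_nonneg hm (mul_pos ha0 hr0).le]

/-- Key quantitative decay bound for `Dfun`. -/
lemma Dfun_le {m u : ℝ} (hm : 0 ≤ m) (hu : 0 < u) : Dfun m u ≤ (5 * m / 3) / u ^ 2 := by
  rw [Dfun]
  exact Dfun_le_aux hm hu (le_Scoord hm) (Scoord_spec m u)

/-- The matched integrand equality. -/
lemma Hfun_S_eq {m u : ℝ} (hm : 0 ≤ m) (hu : 0 < u) :
    (3 * u ^ 2 + 1) / (3 * (Scoord m u) ^ 2 + 1) *
      ((Scoord m u) ^ 2 / Real.sqrt (1 + (Scoord m u) ^ 2 - 2 * m / (Scoord m u)))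
      = Hfun (Scoord m u) u := by
  set s := Scoord m u with hsdef
  have hs0 : 0 < s := Scoord_pos hm hu
  have hspec : s ^ 3 + s = u ^ 3 + u + 2 * m := Scoord_spec m u
  have h1 : 1 + s ^ 2 - 2 * m / s = (u ^ 3 + u) / s := by
    field_simp
    linarith [hspec]
  rw [h1, Real.sqrt_div (by positivity : (0:ℝ) ≤ u ^ 3 + u)]
  have h2 : Real.sqrt (u ^ 3 + u) ≠ 0 := by positivity
  have h3 : Real.sqrt s ≠ 0 := by positivity
  rw [Hfun]
  rw [div_div_eq_mul_div]
  field_simp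

end
noncomputable section

lemma Scoord_mono_u {m u₁ u₂ : ℝ} (h0 : 0 ≤ u₁) (h : u₁ ≤ u₂) : Scoord m u₁ ≤ Scoord m u₂ :=
  psi_strictMono.monotone (by nlinarith [pow_le_pow_left₀ h0 h 3])

lemma sAdS_denom_pos {m s : ℝ} (hm : 0 < m) (hs : 2 * m ≤ s) :
    0 < 1 + s ^ 2 - 2 * m / s := by
  have hs0 : 0 < s := lt_of_lt_of_le (by positivity) hs
  have h1 : 2 * m / s ≤ 1 := (div_le_one hs0).2 hs
  nlinarith [sq_nonneg s, pow_pos hs0 2]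

lemma rho_continuousOn {m : ℝ} (hm : 0 < m) :
    ContinuousOn (fun s : ℝ => s ^ 2 / Real.sqrt (1 + s ^ 2 - 2 * m / s)) (Ici (2 * m)) := by
  apply ContinuousOn.div (continuous_pow 2).continuousOn
  · apply Real.continuous_sqrt.comp_continuousOn
    apply ContinuousOn.sub (continuousOn_const.add (continuous_pow 2).continuousOn)
    apply ContinuousOn.div continuousOn_const continuousOn_id
    intro x hx
    have : (0:ℝ) < x := lt_of_lt_of_le (by positivity) hx
    exact ne_of_gt this
  · intro x hx
    have := sAdS_denom_pos hm hx
    positivity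

/-- Change of variables for the Schwarzschild-AdS volume integrand. -/
lemma sAdS_cov {m : ℝ} (hm : 0 < m) {a b : ℝ} (ha : u0 m ≤ a) (hab : a ≤ b) :
    ∫ u in a..b, Hfun (Scoord m u) u
      = ∫ s in (Scoord m a)..(Scoord m b), s ^ 2 / Real.sqrt (1 + s ^ 2 - 2 * m / s) := by
  have ha0 : 0 < a := lt_of_lt_of_le (u0_pos hm) ha
  have huIcc : uIcc a b = Icc a b := uIcc_of_le hab
  have himg : ∀ x ∈ uIcc a b, 2 * m ≤ Scoord m x := by
    intro x hx
    rw [huIcc] at hx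
    have : u0 m ≤ x := le_trans ha hx.1
    calc 2 * m = Scoord m (u0 m) := (Scoord_u0 m).symm
      _ ≤ Scoord m x := Scoord_mono_u (u0_nonneg hm.le) this
  have h := intervalIntegral.integral_comp_smul_deriv'
      (f := Scoord m) (f' := fun u => (3 * u ^ 2 + 1) / (3 * (Scoord m u) ^ 2 + 1))
      (g := fun s => s ^ 2 / Real.sqrt (1 + s ^ 2 - 2 * m / s))
      (fun x _ => Scoord_hasDerivAt m x)
      (by
        apply Continuous.continuousOn
        apply Continuous.div (by continuity)
        · exact (continuous_const.mul (((Scoord_continuous m).pow 2))).add continuous_const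
        · intro x; positivity)
      (by
        apply (rho_continuousOn hm).mono
        rintro y ⟨x, hx, rfl⟩
        exact himg x hx)
  rw [← h]
  apply intervalIntegral.integral_congr
  intro x hx
  rw [huIcc] at hx
  have hx0 : 0 < x := lt_of_lt_of_le ha0 hx.1
  have := (Hfun_S_eq (m := m) hm.le hx0).symm
  simpa [smul_eq_mul] using this

def phiR (m R : ℝ) : ℝ := psi (R ^ 3 + R - 2 * m)

lemma Scoord_phiR {m R : ℝ} : Scoord m (phiR m R) = R := by
  rw [Scoord, phiR, p_psi, show R ^ 3 + R - 2 * m + 2 * m = R ^ 3 + R by ring, psi_p]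

lemma u0_le_phiR {m R : ℝ} (hm : 0 ≤ m) (hR : 2 * m ≤ R) : u0 m ≤ phiR m R := by
  apply psi_strictMono.monotone
  nlinarith [pow_le_pow_left₀ (by positivity : (0:ℝ) ≤ 2 * m) hR 3]

lemma phiR_le_self {m R : ℝ} (hm : 0 ≤ m) (hR : 0 ≤ R) : phiR m R ≤ R := by
  calc phiR m R ≤ psi (R ^ 3 + R) := psi_strictMono.monotone (by linarith)
    _ = R := psi_p R

lemma phiR_nonneg {m R : ℝ} (hm : 0 ≤ m) (hR : 2 * m ≤ R) : 0 ≤ phiR m R :=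
  le_trans (u0_nonneg hm) (u0_le_phiR hm hR)

lemma phiR_tendsto (m : ℝ) : Tendsto (phiR m) atTop atTop := by
  apply psi_tendsto_s9.comp
  have h := tendsto_atTop_add_const_right atTop (-(2 * m)) pcub_tendsto
  simpa [sub_eq_add_neg] using h

/-- Schwarzschild-AdS volume via the matched coordinate. -/
lemma sAdSVol_eq {m R : ℝ} (hm : 0 < m) (hR : 2 * m ≤ R) :
    sAdSVol m R = 4 * π * ∫ u in (u0 m)..(phiR m R), Hfun (Scoord m u) u := by
  rw [sAdSVol, sAdS_cov hm (le_refl (u0 m)) (u0_le_phiR hm.le hR), Scoord_u0, Scoord_phiR]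

lemma Dfun_continuousOn (m : ℝ) : ContinuousOn (Dfun m) (Ioi 0) := by
  unfold Dfun Hfun
  apply ContinuousOn.sub
  · apply ContinuousOn.div
    · apply Continuous.continuousOn
      apply Continuous.mul
      · exact (((Scoord_continuous m).pow 2).mul
          (Real.continuous_sqrt.comp (Scoord_continuous m)))
      · continuity
    · apply Continuous.continuousOn
      apply Continuous.mul
      · exact (continuous_const.mul ((Scoord_continuous m).pow 2)).add continuous_const
      · exact Real.continuous_sqrt.comp (by continuity)
    · intro x hx
      have hx0 : (0:ℝ) < x := hx
      have h1 : 0 < Real.sqrt (x ^ 3 + x) := Real.sqrt_pos.2 (by positivity)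
      positivity
  · exact gH_continuous.continuousOn

lemma Dfun_integrableOn {m c : ℝ} (hm : 0 ≤ m) (hc : 0 < c) :
    IntegrableOn (Dfun m) (Ioi c) := by
  have hsub : Ioi c ⊆ Ioi (0:ℝ) := Ioi_subset_Ioi hc.le
  have hmeas : AEStronglyMeasurable (Dfun m) (volume.restrict (Ioi c)) :=
    ((Dfun_continuousOn m).mono hsub).aestronglyMeasurable measurableSet_Ioi
  have hint : IntegrableOn (fun u : ℝ => (5 * m / 3) * u ^ (-2:ℝ)) (Ioi c) :=
    (integrableOn_Ioi_rpow_of_lt (by norm_num) hc).const_mul _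
  apply Integrable.mono hint hmeas
  filter_upwards [ae_restrict_mem measurableSet_Ioi] with u hu
  have hu0 : 0 < u := lt_trans hc hu
  have h1 : Dfun m u ≤ (5 * m / 3) / u ^ 2 := Dfun_le hm hu0
  have h2 : 0 ≤ Dfun m u := Dfun_nonneg hm hu0
  have h3 : u ^ (-2:ℝ) = (u ^ 2)⁻¹ := by
    rw [Real.rpow_neg hu0.le, show (2:ℝ) = ((2:ℕ):ℝ) by norm_num, Real.rpow_natCast]
  rw [Real.norm_eq_abs, Real.norm_eq_abs, abs_of_nonneg h2, abs_of_nonneg (by positivity)]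
  rw [h3, ← div_eq_mul_inv]
  exact h1

lemma hypVol_eq_s9 (R : ℝ) : hypVol R = 4 * π * ∫ u in (0:ℝ)..R, gH u := rfl

lemma gH_intervalIntegrable (x y : ℝ) : IntervalIntegrable gH volume x y :=
  gH_continuous.intervalIntegrable x y

lemma hypVol_split {x y : ℝ} :
    hypVol y - hypVol x = 4 * π * ∫ u in x..y, gH u := by
  rw [hypVol_eq_s9, hypVol_eq_s9, ← mul_sub]
  congr 1
  rw [← intervalIntegral.integral_add_adjacent_intervals
    (gH_intervalIntegrable 0 x) (gH_intervalIntegrable x y)]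
  ring

lemma hypVol_le {b : ℝ} (hb : 0 ≤ b) : hypVol b ≤ 4 * π * (b ^ 2 / 2) := by
  rw [hypVol_eq_s9]
  have h1 : ∫ u in (0:ℝ)..b, gH u ≤ ∫ u in (0:ℝ)..b, u := by
    apply intervalIntegral.integral_mono_on hb (gH_intervalIntegrable 0 b)
      (intervalIntegral.intervalIntegrable_id)
    intro x hx
    exact gH_le_self hx.1
  have h2 : ∫ u in (0:ℝ)..b, u = b ^ 2 / 2 := by
    rw [integral_id]
    ring
  have hπ : (0:ℝ) ≤ 4 * π := by positivity
  exact mul_le_mul_of_nonneg_left (h1.trans_eq h2) hπ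

lemma hypVol_nonneg {b : ℝ} (hb : 0 ≤ b) : 0 ≤ hypVol b := by
  rw [hypVol_eq_s9]
  have : 0 ≤ ∫ u in (0:ℝ)..b, gH u :=
    intervalIntegral.integral_nonneg hb fun x _ => gH_nonneg x
  positivity

end
noncomputable section

/-- Candidate value of the renormalized volume. -/
def Phi (m : ℝ) : ℝ := 4 * π * (∫ u in Ioi (u0 m), Dfun m u) - hypVol (u0 m)

lemma pR_phiR (m R : ℝ) : (phiR m R) ^ 3 + phiR m R = R ^ 3 + R - 2 * m := p_psi _

lemma tail_bound {m R : ℝ} (hm : 0 < m) (hR : 2 * m ≤ R) (hR1 : 1 ≤ R) :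
    ∫ u in (phiR m R)..R, gH u ≤ 2 * m / R := by
  set φ := phiR m R with hφdef
  have hφ0 : 0 ≤ φ := phiR_nonneg hm.le hR
  have hφR : φ ≤ R := phiR_le_self hm.le (by linarith)
  have hR0 : (0:ℝ) < R := by linarith
  have hid : (R - φ) * (R ^ 2 + R * φ + φ ^ 2 + 1) = 2 * m := by
    have h := pR_phiR m R
    linear_combination -h
  have h1 : ∫ u in φ..R, gH u ≤ ∫ u in φ..R, u := by
    apply intervalIntegral.integral_mono_on hφR (gH_intervalIntegrable φ R)
      intervalIntegral.intervalIntegrable_id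
    intro x hx
    exact gH_le_self (le_trans hφ0 hx.1)
  have h2 : ∫ u in φ..R, u = (R ^ 2 - φ ^ 2) / 2 := by rw [integral_id]
  have h3 : (R ^ 2 - φ ^ 2) / 2 ≤ 2 * m / R := by
    rw [div_le_div_iff₀ (by norm_num : (0:ℝ) < 2) hR0]
    nlinarith [mul_nonneg (sub_nonneg.2 hφR)
      (show (0:ℝ) ≤ R ^ 2 + R * φ + 2 * φ ^ 2 + 2 by positivity), hid]
  linarith [h1, h2, h3, h2 ▸ h1]

lemma tail_tendsto {m : ℝ} (hm : 0 < m) :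
    Tendsto (fun R => ∫ u in (phiR m R)..R, gH u) atTop (𝓝 0) := by
  apply tendsto_of_tendsto_of_tendsto_of_le_of_le' (tendsto_const_nhds (x := (0:ℝ)))
    (show Tendsto (fun R : ℝ => 2 * m / R) atTop (𝓝 0) from
      Tendsto.div_atTop tendsto_const_nhds tendsto_id)
  · filter_upwards [eventually_ge_atTop (2 * m)] with R hR
    exact intervalIntegral.integral_nonneg (phiR_le_self hm.le (by linarith [hm])) fun x _ => gH_nonneg x
  · filter_upwards [eventually_ge_atTop (2 * m), eventually_ge_atTop 1] with R hR hR1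
    exact tail_bound hm hR hR1

lemma diff_eventually_eq {m : ℝ} (hm : 0 < m) :
    ∀ᶠ R in atTop, sAdSVol m R - hypVol R
      = 4 * π * (∫ u in (u0 m)..(phiR m R), Dfun m u) - hypVol (u0 m)
        - 4 * π * ∫ u in (phiR m R)..R, gH u := by
  filter_upwards [eventually_ge_atTop (2 * m)] with R hR
  have hu0φ : u0 m ≤ phiR m R := u0_le_phiR hm.le hR
  have hφR : phiR m R ≤ R := phiR_le_self hm.le (by linarith [hm])
  have hu00 : 0 < u0 m := u0_pos hm
  -- integrability of Dfun and gH on [u0, φ]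
  have hIccsub : Icc (u0 m) (phiR m R) ⊆ Ioi (0:ℝ) := fun x hx => lt_of_lt_of_le hu00 hx.1
  have hD : IntervalIntegrable (Dfun m) volume (u0 m) (phiR m R) := by
    apply ContinuousOn.intervalIntegrable
    rw [uIcc_of_le hu0φ]
    exact (Dfun_continuousOn m).mono hIccsub
  have hgH : IntervalIntegrable gH volume (u0 m) (phiR m R) :=
    gH_intervalIntegrable _ _
  have hHfun : ∫ u in (u0 m)..(phiR m R), Hfun (Scoord m u) u
      = (∫ u in (u0 m)..(phiR m R), Dfun m u) + ∫ u in (u0 m)..(phiR m R), gH u := by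
    rw [← intervalIntegral.integral_add hD hgH]
    apply intervalIntegral.integral_congr
    intro x _
    simp only [Dfun, gH]
    ring
  have hsplit : hypVol R - hypVol (u0 m)
      = 4 * π * ((∫ u in (u0 m)..(phiR m R), gH u) + ∫ u in (phiR m R)..R, gH u) := by
    rw [hypVol_split]
    congr 1
    rw [intervalIntegral.integral_add_adjacent_intervals
      (gH_intervalIntegrable _ _) (gH_intervalIntegrable _ _)]
  have hvol := sAdSVol_eq hm hR
  rw [hvol, hHfun]
  linarith [hsplit]

lemma renormVol_eq_Phi {m : ℝ} (hm : 0 < m) : renormVol m = Phi m := by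
  have hmain : Tendsto (fun R => sAdSVol m R - hypVol R) atTop (𝓝 (Phi m)) := by
    have hA : Tendsto (fun R => ∫ u in (u0 m)..(phiR m R), Dfun m u) atTop
        (𝓝 (∫ u in Ioi (u0 m), Dfun m u)) :=
      intervalIntegral_tendsto_integral_Ioi (u0 m)
        (Dfun_integrableOn hm.le (u0_pos hm)) (phiR_tendsto m)
    have hB := tail_tendsto hm
    have hcomb : Tendsto (fun R => 4 * π * (∫ u in (u0 m)..(phiR m R), Dfun m u)
        - hypVol (u0 m) - 4 * π * ∫ u in (phiR m R)..R, gH u) atTop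
        (𝓝 (4 * π * (∫ u in Ioi (u0 m), Dfun m u) - hypVol (u0 m) - 4 * π * 0)) := by
      exact ((hA.const_mul (4 * π)).sub_const (hypVol (u0 m))).sub (hB.const_mul (4 * π))
    rw [show (4 * π * (∫ u in Ioi (u0 m), Dfun m u) - hypVol (u0 m) - 4 * π * 0) = Phi m by
      rw [Phi]; ring] at hcomb
    exact hcomb.congr' (Filter.EventuallyEq.symm (diff_eventually_eq hm))
  exact hmain.limUnder_eq

lemma renormVol_zero : renormVol 0 = 0 := by
  have h : (fun R => sAdSVol 0 R - hypVol R) = fun _ => (0:ℝ) := by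
    funext R
    simp [sAdSVol, hypVol]
  rw [renormVol, h]
  exact Tendsto.limUnder_eq tendsto_const_nhds

lemma Phi_add_pos {m : ℝ} (hm : 0 < m) : 0 < Phi m + 8 * π * m ^ 2 := by
  have h1 : 0 ≤ ∫ u in Ioi (u0 m), Dfun m u :=
    setIntegral_nonneg measurableSet_Ioi fun u hu =>
      Dfun_nonneg hm.le (lt_trans (u0_pos hm) hu)
  have h2 : hypVol (u0 m) ≤ 4 * π * ((u0 m) ^ 2 / 2) := hypVol_le (u0_nonneg hm.le)
  have h3 : (u0 m) ^ 2 < (2 * m) ^ 2 := by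
    have := u0_lt_two_mul hm
    nlinarith [u0_nonneg hm.le]
  have hπ : (0:ℝ) < π := Real.pi_pos
  have h4 : 4 * π * ((u0 m) ^ 2 / 2) < 8 * π * m ^ 2 := by
    nlinarith [mul_pos hπ (sub_pos.2 h3)]
  have h5 : 0 ≤ 4 * π * ∫ u in Ioi (u0 m), Dfun m u :=
    mul_nonneg (by positivity) h1
  rw [Phi]
  linarith

end
noncomputable section

lemma chainBound {m₁ m₂ : ℝ} (h1 : 0 < m₁) (h12 : m₁ < m₂) :
    ∫ s in (2 * m₁)..(Scoord m₁ (u0 m₂)), s ^ 2 / Real.sqrt (1 + s ^ 2 - 2 * m₁ / s)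
      < 2 * (m₂ ^ 2 - m₁ ^ 2) := by
  set t := Scoord m₁ (u0 m₂) with htdef
  have h2m₁t : 2 * m₁ ≤ t := by
    rw [htdef, ← Scoord_u0 m₁]
    exact Scoord_mono_u (u0_nonneg h1.le) (u0_mono h1.le h12.le)
  have ht2m₂ : t < 2 * m₂ := by
    have hp : (u0 m₂) ^ 3 + u0 m₂ + 2 * m₁ < (2 * m₂) ^ 3 + 2 * m₂ := by
      have := p_psi (8 * m₂ ^ 3)
      rw [show u0 m₂ = psi (8 * m₂ ^ 3) from rfl]
      nlinarith [this]
    calc t = psi ((u0 m₂) ^ 3 + u0 m₂ + 2 * m₁) := rfl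
      _ < psi ((2 * m₂) ^ 3 + 2 * m₂) := psi_strictMono hp
      _ = 2 * m₂ := psi_p (2 * m₂)
  have hInt : IntervalIntegrable (fun s : ℝ => s ^ 2 / Real.sqrt (1 + s ^ 2 - 2 * m₁ / s))
      volume (2 * m₁) t := by
    apply ContinuousOn.intervalIntegrable
    rw [uIcc_of_le h2m₁t]
    exact (rho_continuousOn h1).mono (fun x hx => hx.1)
  have hmono : ∫ s in (2 * m₁)..t, s ^ 2 / Real.sqrt (1 + s ^ 2 - 2 * m₁ / s)
      ≤ ∫ s in (2 * m₁)..t, s := by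
    apply intervalIntegral.integral_mono_on h2m₁t hInt
      intervalIntegral.intervalIntegrable_id
    intro x hx
    have hx0 : 0 < x := lt_of_lt_of_le (by positivity) hx.1
    have hden : Real.sqrt (x ^ 2) ≤ Real.sqrt (1 + x ^ 2 - 2 * m₁ / x) := by
      apply Real.sqrt_le_sqrt
      have : 2 * m₁ / x ≤ 1 := (div_le_one hx0).2 hx.1
      linarith
    rw [Real.sqrt_sq hx0.le] at hden
    calc x ^ 2 / Real.sqrt (1 + x ^ 2 - 2 * m₁ / x) ≤ x ^ 2 / x :=
        div_le_div_of_nonneg_left (sq_nonneg x) hx0 hden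
      _ = x := by field_simp [sq]
  have hid : ∫ s in (2 * m₁)..t, (s : ℝ) = (t ^ 2 - (2 * m₁) ^ 2) / 2 := by
    rw [integral_id]
  have hfin : (t ^ 2 - (2 * m₁) ^ 2) / 2 < 2 * (m₂ ^ 2 - m₁ ^ 2) := by
    nlinarith [h2m₁t, ht2m₂, h1.le]
  linarith [hmono, hid ▸ hmono]

lemma val_strict_chain {m₁ m₂ : ℝ} (h1 : 0 < m₁) (h12 : m₁ < m₂) :
    Phi m₁ + 8 * π * m₁ ^ 2 < Phi m₂ + 8 * π * m₂ ^ 2 := by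
  have hπ : (0:ℝ) < π := Real.pi_pos
  set a := u0 m₁ with hadef
  set b := u0 m₂ with hbdef
  have ha0 : 0 < a := u0_pos h1
  have hb0 : 0 < b := u0_pos (h1.trans h12)
  have hab : a ≤ b := u0_mono h1.le h12.le
  have I1a : IntegrableOn (Dfun m₁) (Ioi a) := Dfun_integrableOn h1.le ha0
  have I1b : IntegrableOn (Dfun m₁) (Ioi b) := I1a.mono_set (Ioi_subset_Ioi hab)
  have I2b : IntegrableOn (Dfun m₂) (Ioi b) := Dfun_integrableOn (h1.trans h12).le hb0
  have I1ab : IntegrableOn (Dfun m₁) (Ioc a b) := I1a.mono_set Ioc_subset_Ioi_self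
  -- splitting
  have hsplit : ∫ u in Ioi a, Dfun m₁ u
      = (∫ u in Ioc a b, Dfun m₁ u) + ∫ u in Ioi b, Dfun m₁ u := by
    rw [← Ioc_union_Ioi_eq_Ioi hab]
    exact setIntegral_union (Ioc_disjoint_Ioi le_rfl) measurableSet_Ioi I1ab I1b
  -- monotonicity on the tail
  have htail : ∫ u in Ioi b, Dfun m₁ u ≤ ∫ u in Ioi b, Dfun m₂ u := by
    apply setIntegral_mono_on I1b I2b measurableSet_Ioi
    intro u hu
    exact Dfun_mono_m h1.le h12.le (lt_trans hb0 hu)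
  -- the middle piece
  have hIoc : ∫ u in Ioc a b, Dfun m₁ u = ∫ u in a..b, Dfun m₁ u :=
    (intervalIntegral.integral_of_le hab).symm
  have hDint : IntervalIntegrable (Dfun m₁) volume a b := by
    apply ContinuousOn.intervalIntegrable
    rw [uIcc_of_le hab]
    exact (Dfun_continuousOn m₁).mono (fun x hx => lt_of_lt_of_le ha0 hx.1)
  have hkey : (∫ u in a..b, Dfun m₁ u) + (∫ u in a..b, gH u)
      = ∫ u in a..b, Hfun (Scoord m₁ u) u := by
    rw [← intervalIntegral.integral_add hDint (gH_intervalIntegrable a b)]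
    apply intervalIntegral.integral_congr
    intro x _
    simp only [Dfun, gH]
    ring
  have hcov : ∫ u in a..b, Hfun (Scoord m₁ u) u
      = ∫ s in (2 * m₁)..(Scoord m₁ b), s ^ 2 / Real.sqrt (1 + s ^ 2 - 2 * m₁ / s) := by
    rw [sAdS_cov h1 (le_refl a) hab, Scoord_u0]
  have hbound := chainBound h1 h12
  have hhyp : hypVol b - hypVol a = 4 * π * ∫ u in a..b, gH u := hypVol_split
  have hmul : 4 * π * ((∫ u in a..b, Dfun m₁ u) + (∫ u in a..b, gH u))
      < 4 * π * (2 * (m₂ ^ 2 - m₁ ^ 2)) := by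
    apply mul_lt_mul_of_pos_left _ (by positivity : (0:ℝ) < 4 * π)
    rw [hkey, hcov]
    exact hbound
  have htail4 : 4 * π * (∫ u in Ioi b, Dfun m₁ u) ≤ 4 * π * ∫ u in Ioi b, Dfun m₂ u :=
    mul_le_mul_of_nonneg_left htail (by positivity)
  rw [Phi, Phi, ← hadef, ← hbdef]
  have e1 : 4 * π * (∫ u in Ioi a, Dfun m₁ u)
      = 4 * π * (∫ u in a..b, Dfun m₁ u) + 4 * π * (∫ u in Ioi b, Dfun m₁ u) := by
    rw [hsplit, hIoc]; ring
  nlinarith [hmul, htail4, e1, hhyp]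

end

/-- `m ↦ V_m + 8πm²` (renormalized volume plus half the horizon
area `16πm²`) is strictly increasing on `[0,∞)`; in particular it is positive
for every `m > 0`. -/
theorem renormVol_plus_half_horizon_strictMono :
    StrictMonoOn (fun m => renormVol m + 8 * π * m ^ 2) (Set.Ici 0)
    ∧ ∀ m : ℝ, 0 < m → 0 < renormVol m + 8 * π * m ^ 2 := by
  have hval : ∀ m : ℝ, 0 < m → renormVol m + 8 * π * m ^ 2 = Phi m + 8 * π * m ^ 2 := by
    intro m hm; rw [renormVol_eq_Phi hm]
  have hpos : ∀ m : ℝ, 0 < m → 0 < renormVol m + 8 * π * m ^ 2 := by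
    intro m hm
    rw [hval m hm]
    exact Phi_add_pos hm
  constructor
  · intro m₁ h₁ m₂ h₂ h12
    simp only
    rcases (show (0:ℝ) ≤ m₁ from h₁).eq_or_lt with hz | hz
    · rw [← hz, renormVol_zero]
      norm_num
      exact hpos m₂ (lt_of_le_of_lt h₁ h12)
    · rw [hval m₁ hz, hval m₂ (hz.trans h12)]
      exact val_strict_chain hz h12
  · exact hpos
end

section
/- For every c > 0 there exists a constant C > 0 such that for all A ≥ 1, ∫₀^∞ e^(3t/2) A^(3/2) [ (4 e^t A + 16π)^(−1/2) − (4 e^t A + 16π(1 + c e^(−t/2)))^(−1/2) ] dt ≤ C. (The integrand is nonnegative, and the bound C is independent of A.) -/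
open Real MeasureTheory

lemma inv_sqrt_sub_le {x d : ℝ} (hx : 0 < x) (hd : 0 ≤ d) :
    x ^ (-(1:ℝ)/2) - (x + d) ^ (-(1:ℝ)/2) ≤ d / (2 * x * Real.sqrt x) := by
  have hrw : ∀ z : ℝ, 0 ≤ z → z ^ (-(1:ℝ)/2) = (Real.sqrt z)⁻¹ := by
    intro z hz
    rw [show (-(1:ℝ)/2) = -(1/2) by ring, Real.rpow_neg hz, ← Real.sqrt_eq_rpow]
  rw [hrw x hx.le, hrw (x + d) (by linarith)]
  set a := Real.sqrt x with ha'
  set b := Real.sqrt (x + d) with hb'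
  have ha : 0 < a := Real.sqrt_pos.mpr hx
  have hb : 0 < b := Real.sqrt_pos.mpr (by linarith)
  have ha2 : a ^ 2 = x := Real.sq_sqrt hx.le
  have hb2 : b ^ 2 = x + d := Real.sq_sqrt (by linarith)
  have hab : a ≤ b := Real.sqrt_le_sqrt (by linarith)
  have h1 : b ≤ a + d / (2 * a) := by
    have h2 : x + d ≤ (a + d / (2 * a)) ^ 2 := by
      have : (a + d / (2 * a)) ^ 2 = a ^ 2 + d + (d / (2 * a)) ^ 2 := by
        field_simp; ring
      rw [this, ha2]
      nlinarith [sq_nonneg (d / (2 * a))]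
    calc b ≤ Real.sqrt ((a + d / (2 * a)) ^ 2) := Real.sqrt_le_sqrt h2
    _ = a + d / (2 * a) := Real.sqrt_sq (by positivity)
  have h3 : 2 * a * (b - a) ≤ d := by
    nlinarith [mul_le_mul_of_nonneg_left h1 (le_of_lt (mul_pos two_pos ha))]
  have heq : a⁻¹ - b⁻¹ = (b - a) / (a * b) := by field_simp
  rw [heq, div_le_div_iff₀ (by positivity) (by positivity)]
  nlinarith [mul_le_mul_of_nonneg_left h3 hx.le, mul_le_mul_of_nonneg_left hab (mul_nonneg hd ha.le)]

lemma pointwise_bound (c A t : ℝ) (hc : 0 < c) (hA : 1 ≤ A) :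
    Real.exp (3 * t / 2) * A ^ ((3:ℝ)/2) *
      ((4 * Real.exp t * A + 16 * π) ^ (-(1:ℝ)/2)
        - (4 * Real.exp t * A + 16 * π * (1 + c * Real.exp (-t / 2))) ^ (-(1:ℝ)/2))
      ≤ π * c * Real.exp (-t / 2) := by
  have hA0 : (0:ℝ) < A := by linarith
  have hπ := Real.pi_pos
  set x := 4 * Real.exp t * A + 16 * π with hxdef
  set d := 16 * π * (c * Real.exp (-t / 2)) with hddef
  have hx : 0 < x := by positivity
  have hd : 0 ≤ d := by positivity
  have hy : 4 * Real.exp t * A + 16 * π * (1 + c * Real.exp (-t / 2)) = x + d := by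
    rw [hxdef, hddef]; ring
  rw [hy]
  have hkey := inv_sqrt_sub_le hx hd
  have hexp : Real.exp (3 * t / 2) = Real.exp t * Real.exp (t / 2) := by
    rw [← Real.exp_add]; ring_nf
  have hA32 : A ^ ((3:ℝ)/2) = A * Real.sqrt A := by
    rw [show ((3:ℝ)/2) = 1 + 1/2 by norm_num, Real.rpow_add hA0, Real.rpow_one,
      ← Real.sqrt_eq_rpow]
  have hsq : Real.sqrt (4 * Real.exp t * A) = 2 * Real.exp (t / 2) * Real.sqrt A := by
    have h4 : 4 * Real.exp t * A = (2 * Real.exp (t / 2)) ^ 2 * A := by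
      rw [mul_pow, sq (Real.exp (t/2)), ← Real.exp_add]; ring_nf
    rw [h4, Real.sqrt_mul (by positivity), Real.sqrt_sq (by positivity)]
  -- 16 e^{3t/2} A^{3/2} ≤ 2 x √x
  have h16 : 16 * (Real.exp t * Real.exp (t / 2)) * (A * Real.sqrt A) ≤ 2 * x * Real.sqrt x := by
    have hx0 : 4 * Real.exp t * A ≤ x := by rw [hxdef]; nlinarith
    have hs : 2 * Real.exp (t / 2) * Real.sqrt A ≤ Real.sqrt x := by
      rw [← hsq]; exact Real.sqrt_le_sqrt hx0
    have h1 : 2 * (4 * Real.exp t * A) * (2 * Real.exp (t / 2) * Real.sqrt A)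
        ≤ 2 * x * Real.sqrt x := by
      have := mul_le_mul (by linarith : 2 * (4 * Real.exp t * A) ≤ 2 * x) hs
        (by positivity) (by positivity)
      linarith
    nlinarith
  calc Real.exp (3 * t / 2) * A ^ ((3:ℝ)/2) * (x ^ (-(1:ℝ)/2) - (x + d) ^ (-(1:ℝ)/2))
      ≤ Real.exp (3 * t / 2) * A ^ ((3:ℝ)/2) * (d / (2 * x * Real.sqrt x)) :=
        mul_le_mul_of_nonneg_left hkey (by positivity)
    _ ≤ π * c * Real.exp (-t / 2) := by
        rw [hexp, hA32]
        have hrw : Real.exp t * Real.exp (t / 2) * (A * Real.sqrt A) * (d / (2 * x * Real.sqrt x))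
            = Real.exp t * Real.exp (t / 2) * (A * Real.sqrt A) * d / (2 * x * Real.sqrt x) := by
          ring
        rw [hrw, div_le_iff₀ (by positivity)]
        have he : Real.exp (-t / 2) * Real.exp (t / 2) = 1 := by
          rw [← Real.exp_add, show -t / 2 + t / 2 = 0 by ring, Real.exp_zero]
        have := mul_le_mul_of_nonneg_left h16
          (by positivity : 0 ≤ π * c * Real.exp (-t / 2))
        rw [hddef]
        nlinarith [this, he]


/-- uniform (in the initial area `A ≥ 1`) bound on the
volume-deficit integral arising from a negative Hawking-mass lower bound of
size `-c·A^(1/2)` along inverse mean curvature flow. -/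
theorem volume_deficit_integral_bound (c : ℝ) (hc : 0 < c) :
    ∃ C > (0:ℝ), ∀ A : ℝ, 1 ≤ A →
      (∫ t in Set.Ioi (0:ℝ),
          Real.exp (3 * t / 2) * A ^ ((3:ℝ)/2) *
            ((4 * Real.exp t * A + 16 * π) ^ (-(1:ℝ)/2)
              - (4 * Real.exp t * A + 16 * π * (1 + c * Real.exp (-t / 2))) ^ (-(1:ℝ)/2)))
        ≤ C := by
  have hπ := Real.pi_pos
  have hgint : IntegrableOn (fun t : ℝ => π * c * Real.exp (-t / 2)) (Set.Ioi (0:ℝ)) := by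
    have heq : (fun t : ℝ => π * c * Real.exp (-t / 2))
        = fun t : ℝ => π * c * Real.exp (-(1/2) * t) := by
      funext t; rw [show -(1/2) * t = -t / 2 by ring]
    rw [heq]
    exact (exp_neg_integrableOn_Ioi (0:ℝ) (by norm_num : (0:ℝ) < 1/2)).const_mul (π * c)
  set I : ℝ := ∫ t in Set.Ioi (0:ℝ), π * c * Real.exp (-t / 2) with hI
  have hI0 : 0 ≤ I := by
    refine setIntegral_nonneg measurableSet_Ioi fun t _ => by positivity
  refine ⟨I + 1, by linarith, fun A hA => ?_⟩
  have hA0 : (0:ℝ) < A := by linarith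
  have hmono : (∫ t in Set.Ioi (0:ℝ),
          Real.exp (3 * t / 2) * A ^ ((3:ℝ)/2) *
            ((4 * Real.exp t * A + 16 * π) ^ (-(1:ℝ)/2)
              - (4 * Real.exp t * A + 16 * π * (1 + c * Real.exp (-t / 2))) ^ (-(1:ℝ)/2)))
        ≤ I := by
    refine integral_mono_of_nonneg (Filter.Eventually.of_forall fun t => ?_) hgint
      (Filter.Eventually.of_forall fun t => pointwise_bound c A t hc hA)
    have hx : (0:ℝ) < 4 * Real.exp t * A + 16 * π := by positivity
    have hxy : 4 * Real.exp t * A + 16 * π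
        ≤ 4 * Real.exp t * A + 16 * π * (1 + c * Real.exp (-t / 2)) := by
      nlinarith [Real.exp_pos (-t / 2), mul_pos hc (Real.exp_pos (-t / 2))]
    have := Real.rpow_le_rpow_of_nonpos hx hxy (by norm_num : (-(1:ℝ)/2) ≤ 0)
    have h1 : (0:ℝ) ≤ (4 * Real.exp t * A + 16 * π) ^ (-(1:ℝ)/2)
        - (4 * Real.exp t * A + 16 * π * (1 + c * Real.exp (-t / 2))) ^ (-(1:ℝ)/2) := by
      linarith
    positivity
  linarith
end

section
/- Let A ≥ 1, A_J > 0, T ≥ 0, let m' be a real number with m' ≤ (16π)^(−1/2) A^(1/2), and let 0 ≤ β ≤ log(1 + (A_J/A) e^(−T)). Then ∫_T^(T+β) e^(3t/2) A^(3/2) ( 4 e^t A + 16π − e^(−t/2) A^(−1/2) (16π)^(3/2) m' )^(−1/2) dt ≤ (1/2) A_J. -/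
open Real MeasureTheory

/-- the volume gained during a jump of the inverse mean
curvature flow with jumps is bounded by half the jumped-over area `A_J`. -/
theorem jump_volume_bound (A A_J T β m' : ℝ) (hA : 1 ≤ A) (hAJ : 0 < A_J)
    (hT : 0 ≤ T) (hm' : m' ≤ (16 * π) ^ (-(1:ℝ)/2) * A ^ ((1:ℝ)/2))
    (hβ0 : 0 ≤ β) (hβ : β ≤ Real.log (1 + A_J / A * Real.exp (-T))) :
    (∫ t in T..(T + β),
        Real.exp (3 * t / 2) * A ^ ((3:ℝ)/2) *
          (4 * Real.exp t * A + 16 * π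
            - Real.exp (-t / 2) * A ^ (-(1:ℝ)/2) * (16 * π) ^ ((3:ℝ)/2) * m') ^ (-(1:ℝ)/2))
      ≤ (1 / 2) * A_J := by
  have hπ : (0:ℝ) < π := Real.pi_pos
  have h16π : (0:ℝ) < 16 * π := by positivity
  have hA0 : (0:ℝ) < A := lt_of_lt_of_le one_pos hA
  set D : ℝ → ℝ := fun t => 4 * Real.exp t * A + 16 * π
      - Real.exp (-t / 2) * A ^ (-(1:ℝ)/2) * (16 * π) ^ ((3:ℝ)/2) * m' with hD
  have hDge : ∀ t, 0 ≤ t → 4 * Real.exp t * A ≤ D t := by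
    intro t ht
    have hterm : Real.exp (-t/2) * A ^ (-(1:ℝ)/2) * (16*π) ^ ((3:ℝ)/2) * m' ≤ 16 * π := by
      have hc : 0 < Real.exp (-t/2) * A ^ (-(1:ℝ)/2) * (16*π) ^ ((3:ℝ)/2) := by positivity
      calc Real.exp (-t/2) * A ^ (-(1:ℝ)/2) * (16*π) ^ ((3:ℝ)/2) * m'
          ≤ Real.exp (-t/2) * A ^ (-(1:ℝ)/2) * (16*π) ^ ((3:ℝ)/2)
              * ((16*π) ^ (-(1:ℝ)/2) * A ^ ((1:ℝ)/2)) :=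
            mul_le_mul_of_nonneg_left hm' hc.le
        _ = Real.exp (-t/2) * (A ^ (-(1:ℝ)/2) * A ^ ((1:ℝ)/2))
              * ((16*π) ^ ((3:ℝ)/2) * (16*π) ^ (-(1:ℝ)/2)) := by ring
        _ = Real.exp (-t/2) * (16*π) := by
            rw [← Real.rpow_add hA0, ← Real.rpow_add h16π]
            norm_num
        _ ≤ 1 * (16*π) := by
            gcongr
            exact Real.exp_le_one_iff.mpr (by linarith)
        _ = 16*π := one_mul _
    simp only [hD]
    linarith
  have hDpos : ∀ t, 0 ≤ t → 0 < D t := fun t ht =>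
    lt_of_lt_of_le (by positivity) (hDge t ht)
  have hTβ : T ≤ T + β := by linarith
  have hbound : ∀ t ∈ Set.Icc T (T+β),
      Real.exp (3*t/2) * A ^ ((3:ℝ)/2) * (D t) ^ (-(1:ℝ)/2) ≤ 1/2 * A * Real.exp t := by
    intro t ht
    have ht0 : 0 ≤ t := le_trans hT ht.1
    have h1 : (D t) ^ (-(1:ℝ)/2) ≤ (4 * Real.exp t * A) ^ (-(1:ℝ)/2) :=
      Real.rpow_le_rpow_of_nonpos (by positivity) (hDge t ht0) (by norm_num)
    have e1 : (Real.exp t) ^ (-(1:ℝ)/2) = Real.exp (t * (-(1:ℝ)/2)) := by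
      rw [← Real.exp_one_rpow t, ← Real.rpow_mul (Real.exp_pos 1).le, Real.exp_one_rpow]
    have e2 : ((4:ℝ)) ^ (-(1:ℝ)/2) = 1/2 := by
      rw [show ((4:ℝ)) = 2^(2:ℕ) by norm_num, ← Real.rpow_natCast 2 2,
        ← Real.rpow_mul (by norm_num : (0:ℝ) ≤ 2),
        show ((2:ℕ):ℝ) * (-(1:ℝ)/2) = -1 by norm_num, Real.rpow_neg_one]
      norm_num
    have h2 : Real.exp (3*t/2) * A ^ ((3:ℝ)/2) * (4 * Real.exp t * A) ^ (-(1:ℝ)/2)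
        = 1/2 * A * Real.exp t := by
      rw [Real.mul_rpow (by positivity) hA0.le,
        Real.mul_rpow (by norm_num : (0:ℝ) ≤ 4) (Real.exp_pos t).le, e1, e2]
      have hsum : Real.exp (3*t/2) * Real.exp (t * (-(1:ℝ)/2)) = Real.exp t := by
        rw [← Real.exp_add]
        congr 1
        ring
      have hA2 : A ^ ((3:ℝ)/2) * A ^ (-(1:ℝ)/2) = A := by
        rw [← Real.rpow_add hA0]
        norm_num
      calc Real.exp (3*t/2) * A ^ ((3:ℝ)/2) * (1/2 * Real.exp (t * (-(1:ℝ)/2)) * A ^ (-(1:ℝ)/2))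
          = 1/2 * (Real.exp (3*t/2) * Real.exp (t * (-(1:ℝ)/2)))
              * (A ^ ((3:ℝ)/2) * A ^ (-(1:ℝ)/2)) := by ring
        _ = 1/2 * Real.exp t * A := by rw [hsum, hA2]
        _ = 1/2 * A * Real.exp t := by ring
    calc Real.exp (3*t/2) * A ^ ((3:ℝ)/2) * (D t) ^ (-(1:ℝ)/2)
        ≤ Real.exp (3*t/2) * A ^ ((3:ℝ)/2) * (4 * Real.exp t * A) ^ (-(1:ℝ)/2) := by
          apply mul_le_mul_of_nonneg_left h1 (by positivity)
      _ = 1/2 * A * Real.exp t := h2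
  have hcontD : ContinuousOn D (Set.Icc T (T+β)) := by
    apply ContinuousOn.sub
    · fun_prop
    · fun_prop
  have hcontf : ContinuousOn
      (fun t => Real.exp (3*t/2) * A ^ ((3:ℝ)/2) * (D t) ^ (-(1:ℝ)/2)) (Set.Icc T (T+β)) := by
    apply ContinuousOn.mul
    · fun_prop
    · apply ContinuousOn.rpow_const hcontD
      intro t ht
      exact Or.inl (ne_of_gt (hDpos t (le_trans hT ht.1)))
  have hintf : IntervalIntegrable
      (fun t => Real.exp (3*t/2) * A ^ ((3:ℝ)/2) * (D t) ^ (-(1:ℝ)/2))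
      MeasureTheory.volume T (T+β) := by
    apply ContinuousOn.intervalIntegrable
    rwa [Set.uIcc_of_le hTβ]
  have hintg : IntervalIntegrable (fun t => 1/2 * A * Real.exp t)
      MeasureTheory.volume T (T+β) := (Continuous.intervalIntegrable (by fun_prop) _ _)
  have hmono := intervalIntegral.integral_mono_on hTβ hintf hintg hbound
  have hg : (∫ t in T..(T+β), 1/2 * A * Real.exp t)
      = 1/2 * A * (Real.exp (T+β) - Real.exp T) := by
    rw [intervalIntegral.integral_const_mul, integral_exp]
  have hexpβ : Real.exp β ≤ 1 + A_J / A * Real.exp (-T) := by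
    have hpos : 0 < 1 + A_J / A * Real.exp (-T) := by positivity
    calc Real.exp β ≤ Real.exp (Real.log (1 + A_J / A * Real.exp (-T))) :=
          Real.exp_le_exp.mpr hβ
      _ = 1 + A_J / A * Real.exp (-T) := Real.exp_log hpos
  have hkey : Real.exp (T+β) - Real.exp T ≤ A_J / A := by
    have h2 : Real.exp T * Real.exp (-T) = 1 := by
      rw [← Real.exp_add]; simp
    have h1 : Real.exp T * Real.exp β ≤ Real.exp T * (1 + A_J / A * Real.exp (-T)) := by
      exact mul_le_mul_of_nonneg_left hexpβ (Real.exp_pos T).le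
    have h3 : Real.exp T * (1 + A_J / A * Real.exp (-T)) = Real.exp T + A_J / A := by
      rw [mul_add, mul_one,
        show Real.exp T * (A_J / A * Real.exp (-T)) = A_J / A * (Real.exp T * Real.exp (-T)) by
          ring, h2, mul_one]
    rw [Real.exp_add]
    linarith
  have hfinal : 1/2 * A * (Real.exp (T+β) - Real.exp T) ≤ 1/2 * A_J := by
    have := mul_le_mul_of_nonneg_left hkey (by positivity : (0:ℝ) ≤ 1/2 * A)
    have heq : 1/2 * A * (A_J / A) = 1/2 * A_J := by
      field_simp
    linarith [this, heq.le]
  calc (∫ t in T..(T + β),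
        Real.exp (3 * t / 2) * A ^ ((3:ℝ)/2) *
          (4 * Real.exp t * A + 16 * π
            - Real.exp (-t / 2) * A ^ (-(1:ℝ)/2) * (16 * π) ^ ((3:ℝ)/2) * m') ^ (-(1:ℝ)/2))
      = ∫ t in T..(T+β), Real.exp (3*t/2) * A ^ ((3:ℝ)/2) * (D t) ^ (-(1:ℝ)/2) := by
        simp only [hD]
    _ ≤ ∫ t in T..(T+β), 1/2 * A * Real.exp t := hmono
    _ = 1/2 * A * (Real.exp (T+β) - Real.exp T) := hg
    _ ≤ 1/2 * A_J := hfinal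
end
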